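/- arXiv:1408.1533 — 3 statements merged into one kernel-verified Lean document; each statement's English description precedes it below -/
import Mathlib

section
/- Let k ≥ 2 be an integer. There is a constant C = C(k) > 0 such that for any real numbers K, y, z with 1 ≤ K ≤ N and 1 ≤ y < z, we have ∑_{N-K < n ≤ N} |b_{y,z}(n)|² ≤ C · (K y^{1-k} + N^{1/k} (log z)³), where the sum is over integers n. -/
noncomputable def e (x : ℝ) : ℂ := Complex.exp (2 * Real.pi * Complex.I * x)

open Classical in
/-- `b k y z n = ∑_{d^k ∣ n, y ≤ d < z} μ(d)` for `n ≥ 1`, and `b k y z 0 = 0`. -/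
noncomputable def b (k : ℕ) (y z : ℝ) (n : ℕ) : ℤ :=
  ∑ d ∈ (Finset.Icc 1 n).filter (fun d : ℕ => y ≤ (d : ℝ) ∧ (d : ℝ) < z ∧ d ^ k ∣ n),
    ArithmeticFunction.moebius d

open Finset

lemma nat_lcm_pow (d1 d2 k : ℕ) (h1 : d1 ≠ 0) (h2 : d2 ≠ 0) :
    Nat.lcm (d1 ^ k) (d2 ^ k) = Nat.lcm d1 d2 ^ k := by
  have hl : Nat.lcm d1 d2 ≠ 0 := Nat.lcm_ne_zero h1 h2
  apply Nat.factorization_inj (by simp [Nat.lcm_ne_zero, pow_ne_zero, h1, h2])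
    (by simp [pow_ne_zero, hl])
  rw [Nat.factorization_lcm (pow_ne_zero _ h1) (pow_ne_zero _ h2),
    Nat.factorization_pow, Nat.factorization_pow, Nat.factorization_pow,
    Nat.factorization_lcm h1 h2]
  ext p
  simp only [Finsupp.smul_apply, Finsupp.sup_apply, smul_eq_mul]
  rcases le_total (d1.factorization p) (d2.factorization p) with h | h
  · rw [max_eq_right h, max_eq_right (Nat.mul_le_mul_left k h)]
  · rw [max_eq_left h, max_eq_left (Nat.mul_le_mul_left k h)]

-- tail of inv squares
lemma tail_inv_sq (m M : ℕ) (hm : 1 ≤ m) :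
    ∑ a ∈ Icc m M, ((a : ℝ) ^ 2)⁻¹ ≤ 2 / m := by
  have h : Icc m M ⊆ Ioo (m - 1) (M + 1) := by
    intro a ha; simp only [mem_Icc] at ha; simp only [mem_Ioo]; omega
  calc ∑ a ∈ Icc m M, ((a : ℝ) ^ 2)⁻¹
      ≤ ∑ a ∈ Ioo (m - 1) (M + 1), ((a : ℝ) ^ 2)⁻¹ := by
        apply sum_le_sum_of_subset_of_nonneg h
        intro i _ _; positivity
    _ ≤ 2 / ((m - 1 : ℕ) + 1) := by exact_mod_cast sum_Ioo_inv_sq_le (α := ℝ) (m - 1) (M + 1)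
    _ = 2 / m := by
        have : m - 1 + 1 = m := by omega
        rw [show ((m - 1 : ℕ) : ℝ) + 1 = ((m - 1 + 1 : ℕ) : ℝ) by push_cast; ring, this]

lemma tail_pow (k : ℕ) (hk : 2 ≤ k) (t : ℝ) (N : ℕ) :
    ∑ a ∈ (Icc 1 N).filter (fun a : ℕ => t ≤ (a : ℝ)), ((a : ℝ) ^ k)⁻¹
      ≤ 2 / (max t 1) ^ (k - 1) := by
  set m : ℕ := max 1 ⌈t⌉₊ with hm
  have hm1 : 1 ≤ m := le_max_left _ _
  have hmt : max t 1 ≤ (m : ℝ) := by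
    apply max_le
    · exact le_trans (Nat.le_ceil t) (by exact_mod_cast le_max_right 1 ⌈t⌉₊)
    · exact_mod_cast hm1
  have hmax1 : (1 : ℝ) ≤ max t 1 := le_max_right t 1
  have hmaxpos : (0 : ℝ) < max t 1 := lt_of_lt_of_le one_pos hmax1
  have hsub : (Icc 1 N).filter (fun a : ℕ => t ≤ (a : ℝ)) ⊆ Icc m N := by
    intro a ha
    simp only [mem_filter, mem_Icc] at ha ⊢
    refine ⟨max_le ha.1.1 (Nat.ceil_le.2 ha.2), ha.1.2⟩
  have step1 : ∑ a ∈ (Icc 1 N).filter (fun a : ℕ => t ≤ (a : ℝ)), ((a : ℝ) ^ k)⁻¹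
      ≤ ∑ a ∈ Icc m N, ((a : ℝ) ^ k)⁻¹ := by
    apply sum_le_sum_of_subset_of_nonneg hsub
    intro i _ _; positivity
  have step2 : ∑ a ∈ Icc m N, ((a : ℝ) ^ k)⁻¹
      ≤ ∑ a ∈ Icc m N, ((m : ℝ) ^ (k - 2))⁻¹ * ((a : ℝ) ^ 2)⁻¹ := by
    apply sum_le_sum
    intro a ha
    simp only [mem_Icc] at ha
    have hma : (m : ℝ) ≤ (a : ℝ) := by exact_mod_cast ha.1
    have hapos : (0 : ℝ) < a := lt_of_lt_of_le (by exact_mod_cast hm1 : (0:ℝ) < m) hma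
    have hmpos : (0 : ℝ) < m := by exact_mod_cast hm1
    rw [← mul_inv]
    apply inv_anti₀ (by positivity)
    calc (m : ℝ) ^ (k - 2) * (a : ℝ) ^ 2 ≤ (a : ℝ) ^ (k - 2) * (a : ℝ) ^ 2 := by
          apply mul_le_mul_of_nonneg_right (pow_le_pow_left₀ hmpos.le hma _) (by positivity)
      _ = (a : ℝ) ^ k := by rw [← pow_add]; congr 1; omega
  have step3 : ∑ a ∈ Icc m N, ((m : ℝ) ^ (k - 2))⁻¹ * ((a : ℝ) ^ 2)⁻¹
      ≤ ((m : ℝ) ^ (k - 2))⁻¹ * (2 / m) := by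
    rw [← mul_sum]
    exact mul_le_mul_of_nonneg_left (tail_inv_sq m N hm1) (by positivity)
  have hmpos : (0 : ℝ) < m := by exact_mod_cast hm1
  have step4 : ((m : ℝ) ^ (k - 2))⁻¹ * (2 / m) = 2 / (m : ℝ) ^ (k - 1) := by
    rw [div_eq_mul_inv, div_eq_mul_inv, ← mul_assoc, mul_comm _ (2:ℝ), mul_assoc, ← mul_inv,
      ← pow_succ]
    congr 3
    omega
  have step5 : 2 / (m : ℝ) ^ (k - 1) ≤ 2 / (max t 1) ^ (k - 1) := by
    apply div_le_div_of_nonneg_left (by norm_num) (by positivity)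
    exact pow_le_pow_left₀ hmaxpos.le hmt _
  linarith

lemma harmonic_filter (N : ℕ) (z : ℝ) (hz : 1 ≤ z) :
    ∑ a ∈ (Icc 1 N).filter (fun a : ℕ => (a : ℝ) < z), ((a : ℝ))⁻¹
      ≤ 1 + Real.log z := by
  have hsub : (Icc 1 N).filter (fun a : ℕ => (a : ℝ) < z) ⊆ Icc 1 ⌊z⌋₊ := by
    intro a ha
    simp only [mem_filter, mem_Icc] at ha ⊢
    exact ⟨ha.1.1, Nat.le_floor ha.2.le⟩
  calc ∑ a ∈ (Icc 1 N).filter (fun a : ℕ => (a : ℝ) < z), ((a : ℝ))⁻¹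
      ≤ ∑ a ∈ Icc 1 ⌊z⌋₊, ((a : ℝ))⁻¹ := by
        apply sum_le_sum_of_subset_of_nonneg hsub
        intro i _ _; positivity
    _ = ((harmonic ⌊z⌋₊ : ℚ) : ℝ) := by
        simp [harmonic_eq_sum_Icc]
    _ ≤ 1 + Real.log z := harmonic_floor_le_one_add_log z hz


lemma count_dvd_interval (N : ℕ) (K : ℝ) (hK1 : 1 ≤ K) (hKN : K ≤ (N : ℝ)) (m : ℕ) (hm : 1 ≤ m) :
    (((((Icc 1 N).filter (fun n : ℕ => (N : ℝ) - K < (n : ℝ))).filter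
        (fun n : ℕ => m ∣ n)).card : ℝ)) ≤ 2 * K / m + 1 := by
  obtain ⟨a, ha⟩ : ∃ a : ℕ, a = N - ⌈K⌉₊ := ⟨_, rfl⟩
  have hsub : ((Icc 1 N).filter (fun n : ℕ => (N : ℝ) - K < (n : ℝ))).filter
      (fun n : ℕ => m ∣ n) ⊆ (Ioc a N).filter (fun n : ℕ => m ∣ n) := by
    intro n hn
    simp only [mem_filter, mem_Icc, mem_Ioc] at hn ⊢
    refine ⟨⟨?_, hn.1.1.2⟩, hn.2⟩
    have hcK : (K : ℝ) ≤ (⌈K⌉₊ : ℝ) := Nat.le_ceil K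
    have : ((a : ℕ) : ℝ) ≤ (N : ℝ) - K ∨ a = 0 := by
      rcases le_or_gt ⌈K⌉₊ N with h | h
      · left
        rw [ha, Nat.cast_sub h]
        linarith
      · right; omega
    rcases this with h | h
    · have : (a : ℝ) < (n : ℝ) := lt_of_le_of_lt h hn.1.2
      exact_mod_cast this
    · rw [h]; exact hn.1.1.1
  have hcard1 : ((Ioc a N).filter (fun n : ℕ => m ∣ n)).card = N / m - a / m := by
    have h1 : (Ioc a N).filter (fun n : ℕ => m ∣ n)
        = (Ioc 0 N).filter (fun n : ℕ => m ∣ n) \ (Ioc 0 a).filter (fun n : ℕ => m ∣ n) := by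
      ext x
      simp only [mem_filter, mem_Ioc, mem_sdiff]
      constructor
      · rintro ⟨⟨h1, h2⟩, h3⟩
        exact ⟨⟨⟨by omega, h2⟩, h3⟩, by rintro ⟨⟨_, h5⟩, _⟩; omega⟩
      · rintro ⟨⟨⟨h1, h2⟩, h3⟩, h4⟩
        refine ⟨⟨?_, h2⟩, h3⟩
        by_contra h5
        exact h4 ⟨⟨h1, by omega⟩, h3⟩
    rw [h1, card_sdiff_of_subset]
    · rw [Nat.Ioc_filter_dvd_card_eq_div, Nat.Ioc_filter_dvd_card_eq_div]
    · intro x hx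
      simp only [mem_filter, mem_Ioc] at hx ⊢
      have : a ≤ N := by omega
      exact ⟨⟨hx.1.1, le_trans hx.1.2 this⟩, hx.2⟩
  have h0 : 0 < m := hm
  have h2' := Nat.add_div (a := a) (b := N - a) h0
  have hN : a + (N - a) = N := by omega
  rw [hN] at h2'
  have h2 : N / m ≤ a / m + (N - a) / m + 1 := by
    rcases le_or_gt m (a % m + (N - a) % m) with hc | hc
    · rw [h2', if_pos hc]
    · rw [h2', if_neg (not_le.mpr hc)]; omega
  have h3 : N - a ≤ ⌈K⌉₊ := by omega
  have h4 : (N - a) / m ≤ ⌈K⌉₊ / m := Nat.div_le_div_right h3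
  clear h2' hN
  have hcard2 : N / m - a / m ≤ ⌈K⌉₊ / m + 1 := by
    apply Nat.sub_le_iff_le_add.mpr
    calc N / m ≤ a / m + (N - a) / m + 1 := h2
      _ ≤ a / m + ⌈K⌉₊ / m + 1 := Nat.add_le_add (Nat.add_le_add_left h4 _) le_rfl
      _ = ⌈K⌉₊ / m + 1 + a / m := by ring
  have hcard3 := card_le_card hsub
  have hmR : (0 : ℝ) < m := by exact_mod_cast h0
  calc (((((Icc 1 N).filter (fun n : ℕ => (N : ℝ) - K < (n : ℝ))).filter
        (fun n : ℕ => m ∣ n)).card : ℝ))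
      ≤ ((⌈K⌉₊ / m + 1 : ℕ) : ℝ) := by
        exact_mod_cast le_trans hcard3 (hcard1 ▸ hcard2)
    _ = ((⌈K⌉₊ / m : ℕ) : ℝ) + 1 := by push_cast; ring
    _ ≤ (⌈K⌉₊ : ℝ) / m + 1 := by
        have := Nat.cast_div_le (α := ℝ) (m := ⌈K⌉₊) (n := m)
        linarith
    _ ≤ 2 * K / m + 1 := by
        have hceil : (⌈K⌉₊ : ℝ) ≤ K + 1 := le_of_lt (Nat.ceil_lt_add_one (by linarith))
        gcongr
        linarith

lemma count_dvd_interval_le_one (N : ℕ) (K : ℝ) (m : ℕ) (hmK : K < (m : ℝ)) :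
    ((((Icc 1 N).filter (fun n : ℕ => (N : ℝ) - K < (n : ℝ))).filter
        (fun n : ℕ => m ∣ n)).card) ≤ 1 := by
  apply Finset.card_le_one.mpr
  have key : ∀ p q : ℕ, p ∈ (((Icc 1 N).filter (fun n : ℕ => (N : ℝ) - K < (n : ℝ))).filter
      (fun n : ℕ => m ∣ n)) → q ∈ (((Icc 1 N).filter (fun n : ℕ => (N : ℝ) - K < (n : ℝ))).filter
      (fun n : ℕ => m ∣ n)) → p ≤ q → p = q := by
    intro p q hp hq hpq
    simp only [mem_filter, mem_Icc] at hp hq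
    obtain ⟨c, hc⟩ := Nat.dvd_sub hq.2 hp.2
    rcases Nat.eq_zero_or_pos (q - p) with h0 | h0
    · omega
    · exfalso
      have hm : m ≤ q - p := Nat.le_of_dvd h0 ⟨c, hc⟩
      have h1 : ((q - p : ℕ) : ℝ) = (q : ℝ) - (p : ℝ) := by
        rw [Nat.cast_sub hpq]
      have h2 : (q : ℝ) ≤ N := by exact_mod_cast hq.1.1.2
      have h3 : (N : ℝ) - K < p := hp.1.2
      have h4 : ((q - p : ℕ) : ℝ) < K := by rw [h1]; linarith
      have h5 : (m : ℝ) ≤ ((q - p : ℕ) : ℝ) := by exact_mod_cast hm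
      linarith
  intro a ha b hb
  rcases le_total a b with h | h
  · exact key a b ha hb h
  · exact (key b a hb ha h).symm

lemma sum_le_sum_inj {α β : Type*} [DecidableEq β] (s : Finset α) (t : Finset β) (e : α → β)
    (f : β → ℝ) (he : ∀ x ∈ s, e x ∈ t)
    (hinj : ∀ x ∈ s, ∀ x' ∈ s, e x = e x' → x = x')
    (hf : ∀ j ∈ t, 0 ≤ f j) : ∑ x ∈ s, f (e x) ≤ ∑ j ∈ t, f j := by
  have h1 : ∑ x ∈ s, f (e x) = ∑ j ∈ s.image e, f j := (Finset.sum_image hinj).symm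
  rw [h1]
  apply sum_le_sum_of_subset_of_nonneg
  · intro j hj
    obtain ⟨x, hx, rfl⟩ := Finset.mem_image.mp hj
    exact he x hx
  · intro j hj _
    exact hf j hj

lemma abs_moebius_le_one (d : ℕ) : |(ArithmeticFunction.moebius d : ℝ)| ≤ 1 := by
  rcases eq_or_ne (ArithmeticFunction.moebius d) 0 with h | h
  · simp [h]
  · have := ArithmeticFunction.moebius_ne_zero_iff_squarefree.mp h
    rw [ArithmeticFunction.moebius_apply_of_squarefree this]
    simp [abs_pow]

open Classical in
lemma b_sq_le (k : ℕ) (hk : 1 ≤ k) (y z : ℝ) (N n : ℕ) (hn : n ∈ Finset.Icc 1 N) :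
    ((b k y z n : ℝ)) ^ 2 ≤ ∑ p ∈ (((Icc 1 N).filter (fun d : ℕ => y ≤ (d : ℝ) ∧ (d : ℝ) < z)) ×ˢ
      ((Icc 1 N).filter (fun d : ℕ => y ≤ (d : ℝ) ∧ (d : ℝ) < z))),
      (if p.1 ^ k ∣ n ∧ p.2 ^ k ∣ n then (1 : ℝ) else 0) := by
  simp only [mem_Icc] at hn
  set E : Finset ℕ := (Icc 1 N).filter (fun d : ℕ => y ≤ (d : ℝ) ∧ (d : ℝ) < z) with hE
  have hDn : (Icc 1 n).filter (fun d : ℕ => y ≤ (d : ℝ) ∧ (d : ℝ) < z ∧ d ^ k ∣ n)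
      = E.filter (fun d => d ^ k ∣ n) := by
    ext d
    simp only [hE, mem_filter, mem_Icc]
    constructor
    · rintro ⟨⟨h1, h2⟩, h3, h4, h5⟩
      exact ⟨⟨⟨h1, le_trans h2 hn.2⟩, h3, h4⟩, h5⟩
    · rintro ⟨⟨⟨h1, h2⟩, h3, h4⟩, h5⟩
      have hd : d ^ k ≤ n := Nat.le_of_dvd (by omega) h5
      have hdk : d ≤ d ^ k := Nat.le_self_pow (by omega) d
      exact ⟨⟨h1, by omega⟩, h3, h4, h5⟩
  have habs : |(b k y z n : ℝ)| ≤ ((E.filter (fun d => d ^ k ∣ n)).card : ℝ) := by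
    rw [b, hDn]
    push_cast
    calc |∑ d ∈ E.filter (fun d => d ^ k ∣ n), ((ArithmeticFunction.moebius d : ℤ) : ℝ)|
        ≤ ∑ d ∈ E.filter (fun d => d ^ k ∣ n), |((ArithmeticFunction.moebius d : ℤ) : ℝ)| :=
          Finset.abs_sum_le_sum_abs _ _
      _ ≤ ∑ d ∈ E.filter (fun d => d ^ k ∣ n), (1 : ℝ) := by
          apply sum_le_sum
          intro d _
          exact abs_moebius_le_one d
      _ = ((E.filter (fun d => d ^ k ∣ n)).card : ℝ) := by simp
  have hsq : ((b k y z n : ℝ)) ^ 2 ≤ (((E.filter (fun d => d ^ k ∣ n)).card : ℝ)) ^ 2 := by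
    rw [← sq_abs]
    apply pow_le_pow_left₀ (abs_nonneg _) habs
  refine hsq.trans ?_
  have hcard : (((E.filter (fun d => d ^ k ∣ n)).card : ℝ))
      = ∑ d ∈ E, (if d ^ k ∣ n then (1 : ℝ) else 0) := by
    rw [Finset.sum_boole]
  rw [hcard, sq, Finset.sum_mul_sum]
  rw [Finset.sum_product]
  apply le_of_eq
  apply Finset.sum_congr rfl
  intro d1 _
  apply Finset.sum_congr rfl
  intro d2 _
  by_cases h1 : d1 ^ k ∣ n <;> by_cases h2 : d2 ^ k ∣ n <;> simp [h1, h2]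

open Classical in
lemma lcm_sum_le (k : ℕ) (hk : 2 ≤ k) (N : ℕ) (y z : ℝ) (hy : 1 ≤ y) :
    ∑ p ∈ (((Icc 1 N).filter (fun d : ℕ => y ≤ (d : ℝ) ∧ (d : ℝ) < z)) ×ˢ
          ((Icc 1 N).filter (fun d : ℕ => y ≤ (d : ℝ) ∧ (d : ℝ) < z))),
      (((Nat.lcm p.1 p.2 : ℕ) : ℝ) ^ k)⁻¹ ≤ 12 / y ^ (k - 1) := by
  have hy0 : (0 : ℝ) < y := lt_of_lt_of_le one_pos hy
  set s : Finset ℕ := Icc 1 N with hs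
  set E : Finset ℕ := s.filter (fun d : ℕ => y ≤ (d : ℝ) ∧ (d : ℝ) < z) with hE
  set T : Finset (ℕ × ℕ × ℕ) := (s ×ˢ (s ×ˢ s)).filter
      (fun t => y ≤ ((t.1 * t.2.1 : ℕ) : ℝ) ∧ y ≤ ((t.1 * t.2.2 : ℕ) : ℝ)) with hT
  have hmemE : ∀ d ∈ E, 1 ≤ d ∧ d ≤ N ∧ y ≤ (d : ℝ) := by
    intro d hd
    simp only [hE, hs, mem_filter, mem_Icc] at hd
    exact ⟨hd.1.1, hd.1.2, hd.2.1⟩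
  -- step 1 : injection into triples
  have step1 : ∑ p ∈ E ×ˢ E, (((Nat.lcm p.1 p.2 : ℕ) : ℝ) ^ k)⁻¹
      ≤ ∑ t ∈ T, (((t.1 * t.2.1 * t.2.2 : ℕ) : ℝ) ^ k)⁻¹ := by
    have key : ∀ p ∈ E ×ˢ E, (((Nat.lcm p.1 p.2 : ℕ) : ℝ) ^ k)⁻¹
        = (fun t : ℕ × ℕ × ℕ => (((t.1 * t.2.1 * t.2.2 : ℕ) : ℝ) ^ k)⁻¹)
          (Nat.gcd p.1 p.2, (p.1 / Nat.gcd p.1 p.2, p.2 / Nat.gcd p.1 p.2)) := by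
      intro p hp
      simp only [mem_product] at hp
      obtain ⟨h1, _, _⟩ := hmemE _ hp.1
      obtain ⟨h2, _, _⟩ := hmemE _ hp.2
      have hg : 0 < Nat.gcd p.1 p.2 := Nat.gcd_pos_of_pos_left _ (by omega)
      have : Nat.gcd p.1 p.2 * (p.1 / Nat.gcd p.1 p.2) * (p.2 / Nat.gcd p.1 p.2)
          = Nat.lcm p.1 p.2 := by
        rw [Nat.mul_div_cancel' (Nat.gcd_dvd_left p.1 p.2),
          ← Nat.mul_div_assoc _ (Nat.gcd_dvd_right p.1 p.2)]
        rfl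
      simp only [this]
    calc ∑ p ∈ E ×ˢ E, (((Nat.lcm p.1 p.2 : ℕ) : ℝ) ^ k)⁻¹
        = ∑ p ∈ E ×ˢ E, (fun t : ℕ × ℕ × ℕ => (((t.1 * t.2.1 * t.2.2 : ℕ) : ℝ) ^ k)⁻¹)
            ((fun p : ℕ × ℕ =>
              (Nat.gcd p.1 p.2, (p.1 / Nat.gcd p.1 p.2, p.2 / Nat.gcd p.1 p.2))) p) :=
          Finset.sum_congr rfl key
      _ ≤ ∑ t ∈ T, (((t.1 * t.2.1 * t.2.2 : ℕ) : ℝ) ^ k)⁻¹ := by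
          refine sum_le_sum_inj (E ×ˢ E) T
            (fun p : ℕ × ℕ =>
              (Nat.gcd p.1 p.2, (p.1 / Nat.gcd p.1 p.2, p.2 / Nat.gcd p.1 p.2)))
            (fun t : ℕ × ℕ × ℕ => (((t.1 * t.2.1 * t.2.2 : ℕ) : ℝ) ^ k)⁻¹) ?_ ?_ ?_
          · intro p hp
            simp only [mem_product] at hp
            obtain ⟨h11, h12, h13⟩ := hmemE _ hp.1
            obtain ⟨h21, h22, h23⟩ := hmemE _ hp.2
            have hg : 0 < Nat.gcd p.1 p.2 := Nat.gcd_pos_of_pos_left _ (by omega)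
            have hgd1 : Nat.gcd p.1 p.2 ∣ p.1 := Nat.gcd_dvd_left _ _
            have hgd2 : Nat.gcd p.1 p.2 ∣ p.2 := Nat.gcd_dvd_right _ _
            have he1 : Nat.gcd p.1 p.2 * (p.1 / Nat.gcd p.1 p.2) = p.1 :=
              Nat.mul_div_cancel' hgd1
            have he2 : Nat.gcd p.1 p.2 * (p.2 / Nat.gcd p.1 p.2) = p.2 :=
              Nat.mul_div_cancel' hgd2
            simp only [hT, mem_filter, mem_product, mem_Icc, hs]
            refine ⟨⟨⟨hg, le_trans (Nat.le_of_dvd (by omega) hgd1) h12⟩,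
              ⟨Nat.div_pos (Nat.le_of_dvd (by omega) hgd1) hg,
                le_trans (Nat.div_le_self _ _) h12⟩,
              ⟨Nat.div_pos (Nat.le_of_dvd (by omega) hgd2) hg,
                le_trans (Nat.div_le_self _ _) h22⟩⟩, ?_, ?_⟩
            · rw [he1]; exact h13
            · rw [he2]; exact h23
          · intro p hp p' hp' heq
            simp only [Prod.mk.injEq] at heq
            obtain ⟨hg, ha, hb⟩ := heq
            have he1 : Nat.gcd p.1 p.2 * (p.1 / Nat.gcd p.1 p.2) = p.1 :=
              Nat.mul_div_cancel' (Nat.gcd_dvd_left _ _)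
            have he2 : Nat.gcd p.1 p.2 * (p.2 / Nat.gcd p.1 p.2) = p.2 :=
              Nat.mul_div_cancel' (Nat.gcd_dvd_right _ _)
            have he1' : Nat.gcd p'.1 p'.2 * (p'.1 / Nat.gcd p'.1 p'.2) = p'.1 :=
              Nat.mul_div_cancel' (Nat.gcd_dvd_left _ _)
            have he2' : Nat.gcd p'.1 p'.2 * (p'.2 / Nat.gcd p'.1 p'.2) = p'.2 :=
              Nat.mul_div_cancel' (Nat.gcd_dvd_right _ _)
            have hp1 : p.1 = p'.1 := by rw [← he1, ← he1', ha, hg]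
            have hp2 : p.2 = p'.2 := by rw [← he2, ← he2', hb, hg]
            exact Prod.ext hp1 hp2
          · intro j _
            positivity
  refine step1.trans ?_
  -- step 2 : rewrite the triple sum as iterated sums
  have step2 : ∑ t ∈ T, (((t.1 * t.2.1 * t.2.2 : ℕ) : ℝ) ^ k)⁻¹
      = ∑ g ∈ s, ((g : ℝ) ^ k)⁻¹ *
          ((∑ a ∈ s, (if y ≤ ((g * a : ℕ) : ℝ) then ((a : ℝ) ^ k)⁻¹ else 0)) *
           (∑ c ∈ s, (if y ≤ ((g * c : ℕ) : ℝ) then ((c : ℝ) ^ k)⁻¹ else 0))) := by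
    rw [hT, Finset.sum_filter, Finset.sum_product]
    apply Finset.sum_congr rfl
    intro g hg
    rw [Finset.sum_product]
    calc ∑ a ∈ s, ∑ c ∈ s, (if y ≤ ((g * a : ℕ) : ℝ) ∧ y ≤ ((g * c : ℕ) : ℝ)
            then (((g * a * c : ℕ) : ℝ) ^ k)⁻¹ else 0)
        = ∑ a ∈ s, ∑ c ∈ s, (((g : ℝ) ^ k)⁻¹ *
            (if y ≤ ((g * a : ℕ) : ℝ) then ((a : ℝ) ^ k)⁻¹ else 0)) *
            (if y ≤ ((g * c : ℕ) : ℝ) then ((c : ℝ) ^ k)⁻¹ else 0) := by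
          apply Finset.sum_congr rfl
          intro a _
          apply Finset.sum_congr rfl
          intro c _
          push_cast
          by_cases h1 : y ≤ (g : ℝ) * a
          · by_cases h2 : y ≤ (g : ℝ) * c
            · simp only [h1, h2, and_self, if_true, ite_true]
              rw [mul_pow, mul_pow, mul_inv, mul_inv]
            · simp [h1, h2]
          · simp [h1]
      _ = (∑ a ∈ s, ((g : ℝ) ^ k)⁻¹ *
            (if y ≤ ((g * a : ℕ) : ℝ) then ((a : ℝ) ^ k)⁻¹ else 0)) *
          (∑ c ∈ s, (if y ≤ ((g * c : ℕ) : ℝ) then ((c : ℝ) ^ k)⁻¹ else 0)) :=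
          (Finset.sum_mul_sum _ _ _ _).symm
      _ = ((g : ℝ) ^ k)⁻¹ *
          ((∑ a ∈ s, (if y ≤ ((g * a : ℕ) : ℝ) then ((a : ℝ) ^ k)⁻¹ else 0)) *
           (∑ c ∈ s, (if y ≤ ((g * c : ℕ) : ℝ) then ((c : ℝ) ^ k)⁻¹ else 0))) := by
          rw [← Finset.mul_sum]
          ring
  rw [step2]
  -- step 3 : bound inner sums
  have hinner : ∀ g ∈ s, ∑ a ∈ s, (if y ≤ ((g * a : ℕ) : ℝ) then ((a : ℝ) ^ k)⁻¹ else 0)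
      ≤ 2 / (max (y / (g : ℝ)) 1) ^ (k - 1) := by
    intro g hg
    rw [hs, mem_Icc] at hg
    have hgpos : (0 : ℝ) < g := by exact_mod_cast hg.1
    rw [← Finset.sum_filter]
    have hfil : s.filter (fun a => y ≤ ((g * a : ℕ) : ℝ))
        = (Icc 1 N).filter (fun a : ℕ => y / (g : ℝ) ≤ (a : ℝ)) := by
      rw [hs]
      apply Finset.filter_congr
      intro a _
      rw [Nat.cast_mul, div_le_iff₀ hgpos, mul_comm]
    rw [hfil]
    exact tail_pow k hk (y / (g : ℝ)) N
  have hinner0 : ∀ g ∈ s, 0 ≤ ∑ a ∈ s, (if y ≤ ((g * a : ℕ) : ℝ) then ((a : ℝ) ^ k)⁻¹ else 0) := by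
    intro g _
    apply Finset.sum_nonneg
    intro a _
    split <;> positivity
  have step3 : ∑ g ∈ s, ((g : ℝ) ^ k)⁻¹ *
        ((∑ a ∈ s, (if y ≤ ((g * a : ℕ) : ℝ) then ((a : ℝ) ^ k)⁻¹ else 0)) *
         (∑ c ∈ s, (if y ≤ ((g * c : ℕ) : ℝ) then ((c : ℝ) ^ k)⁻¹ else 0)))
      ≤ ∑ g ∈ s, ((g : ℝ) ^ k)⁻¹ *
          ((2 / (max (y / (g : ℝ)) 1) ^ (k - 1)) * (2 / (max (y / (g : ℝ)) 1) ^ (k - 1))) := by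
    apply Finset.sum_le_sum
    intro g hg
    apply mul_le_mul_of_nonneg_left ?_ (by positivity)
    have h1 := hinner g hg
    have h0 := hinner0 g hg
    have hB0 : (0 : ℝ) ≤ 2 / (max (y / (g : ℝ)) 1) ^ (k - 1) := by positivity
    exact mul_le_mul h1 h1 h0 hB0
  refine (step3.trans ?_)
  -- step 4 : split the g-sum
  rw [← Finset.sum_filter_add_sum_filter_not s (fun g : ℕ => (g : ℝ) ≤ y)]
  have hbr1 : ∑ g ∈ s.filter (fun g : ℕ => (g : ℝ) ≤ y), ((g : ℝ) ^ k)⁻¹ *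
        ((2 / (max (y / (g : ℝ)) 1) ^ (k - 1)) * (2 / (max (y / (g : ℝ)) 1) ^ (k - 1)))
      ≤ 4 / y ^ (k - 1) := by
    have hterm : ∀ g ∈ s.filter (fun g : ℕ => (g : ℝ) ≤ y), ((g : ℝ) ^ k)⁻¹ *
        ((2 / (max (y / (g : ℝ)) 1) ^ (k - 1)) * (2 / (max (y / (g : ℝ)) 1) ^ (k - 1)))
        ≤ 4 / y ^ k := by
      intro g hg
      have hgf := mem_filter.mp hg
      have hgs := hgf.1
      rw [hs, mem_Icc] at hgs
      have hg1 : (1 : ℝ) ≤ g := by exact_mod_cast hgs.1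
      have hgpos : (0 : ℝ) < g := by linarith
      have hgy : (g : ℝ) ≤ y := hgf.2
      have hM : max (y / (g : ℝ)) 1 = y / (g : ℝ) :=
        max_eq_left ((one_le_div hgpos).mpr hgy)
      rw [hM]
      have hyg1 : (1 : ℝ) ≤ y / g := (one_le_div hgpos).mpr hgy
      have hygpos : (0 : ℝ) < y / g := by linarith
      have heq : ((g : ℝ) ^ k)⁻¹ * ((2 / (y / (g : ℝ)) ^ (k - 1)) * (2 / (y / (g : ℝ)) ^ (k - 1)))
          = 4 / ((g : ℝ) ^ k * ((y / (g : ℝ)) ^ (k - 1)) ^ 2) := by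
        field_simp
        ring
      rw [heq]
      apply div_le_div_of_nonneg_left (by norm_num) (by positivity)
      have hid : (g : ℝ) ^ k * ((y / (g : ℝ)) ^ (k - 1)) ^ 2 = y ^ k * (y / (g : ℝ)) ^ (k - 2) := by
        obtain ⟨t, rfl⟩ : ∃ t, k = t + 2 := ⟨k - 2, by omega⟩
        simp only [Nat.add_sub_cancel, show t + 2 - 1 = t + 1 by omega]
        rw [div_pow, div_pow, div_pow]
        field_simp
        ring
      rw [hid]
      exact le_mul_of_one_le_right (by positivity) (one_le_pow₀ hyg1)
    calc ∑ g ∈ s.filter (fun g : ℕ => (g : ℝ) ≤ y), ((g : ℝ) ^ k)⁻¹ *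
          ((2 / (max (y / (g : ℝ)) 1) ^ (k - 1)) * (2 / (max (y / (g : ℝ)) 1) ^ (k - 1)))
        ≤ (s.filter (fun g : ℕ => (g : ℝ) ≤ y)).card • (4 / y ^ k) :=
          Finset.sum_le_card_nsmul _ _ _ hterm
      _ = ((s.filter (fun g : ℕ => (g : ℝ) ≤ y)).card : ℝ) * (4 / y ^ k) := by
          rw [nsmul_eq_mul]
      _ ≤ y * (4 / y ^ k) := by
          apply mul_le_mul_of_nonneg_right ?_ (by positivity)
          have hsub : s.filter (fun g : ℕ => (g : ℝ) ≤ y) ⊆ Icc 1 ⌊y⌋₊ := by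
            intro g hg
            have hgf := mem_filter.mp hg
            have hgs := hgf.1
            rw [hs, mem_Icc] at hgs
            rw [mem_Icc]
            exact ⟨hgs.1, Nat.le_floor hgf.2⟩
          calc ((s.filter (fun g : ℕ => (g : ℝ) ≤ y)).card : ℝ)
              ≤ ((Icc 1 ⌊y⌋₊).card : ℝ) := by exact_mod_cast card_le_card hsub
            _ = (⌊y⌋₊ : ℝ) := by rw [Nat.card_Icc]; simp
            _ ≤ y := Nat.floor_le (by linarith)
      _ = 4 / y ^ (k - 1) := by
          rw [show k = (k - 1) + 1 by omega]
          simp only [Nat.add_sub_cancel]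
          rw [pow_succ']
          field_simp
  have hbr2 : ∑ g ∈ s.filter (fun g : ℕ => ¬ (g : ℝ) ≤ y), ((g : ℝ) ^ k)⁻¹ *
        ((2 / (max (y / (g : ℝ)) 1) ^ (k - 1)) * (2 / (max (y / (g : ℝ)) 1) ^ (k - 1)))
      ≤ 8 / y ^ (k - 1) := by
    have hterm : ∀ g ∈ s.filter (fun g : ℕ => ¬ (g : ℝ) ≤ y), ((g : ℝ) ^ k)⁻¹ *
        ((2 / (max (y / (g : ℝ)) 1) ^ (k - 1)) * (2 / (max (y / (g : ℝ)) 1) ^ (k - 1)))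
        ≤ 4 * ((g : ℝ) ^ k)⁻¹ := by
      intro g hg
      have hM1 : (1 : ℝ) ≤ max (y / (g : ℝ)) 1 := le_max_right _ _
      have hB : 2 / (max (y / (g : ℝ)) 1) ^ (k - 1) ≤ 2 :=
        div_le_self (by norm_num) (one_le_pow₀ hM1)
      have hB0 : (0 : ℝ) ≤ 2 / (max (y / (g : ℝ)) 1) ^ (k - 1) := by positivity
      have : (2 / (max (y / (g : ℝ)) 1) ^ (k - 1)) * (2 / (max (y / (g : ℝ)) 1) ^ (k - 1))
          ≤ 4 := by nlinarith
      calc ((g : ℝ) ^ k)⁻¹ *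
          ((2 / (max (y / (g : ℝ)) 1) ^ (k - 1)) * (2 / (max (y / (g : ℝ)) 1) ^ (k - 1)))
          ≤ ((g : ℝ) ^ k)⁻¹ * 4 := mul_le_mul_of_nonneg_left this (by positivity)
        _ = 4 * ((g : ℝ) ^ k)⁻¹ := by ring
    calc ∑ g ∈ s.filter (fun g : ℕ => ¬ (g : ℝ) ≤ y), ((g : ℝ) ^ k)⁻¹ *
          ((2 / (max (y / (g : ℝ)) 1) ^ (k - 1)) * (2 / (max (y / (g : ℝ)) 1) ^ (k - 1)))
        ≤ ∑ g ∈ s.filter (fun g : ℕ => ¬ (g : ℝ) ≤ y), 4 * ((g : ℝ) ^ k)⁻¹ :=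
          Finset.sum_le_sum hterm
      _ ≤ ∑ g ∈ s.filter (fun g : ℕ => y ≤ (g : ℝ)), 4 * ((g : ℝ) ^ k)⁻¹ := by
          apply sum_le_sum_of_subset_of_nonneg
          · intro g hg
            simp only [mem_filter] at hg ⊢
            exact ⟨hg.1, le_of_lt (lt_of_not_ge hg.2)⟩
          · intro g _ _
            positivity
      _ = 4 * ∑ g ∈ s.filter (fun g : ℕ => y ≤ (g : ℝ)), ((g : ℝ) ^ k)⁻¹ := by
          rw [Finset.mul_sum]
      _ ≤ 4 * (2 / (max y 1) ^ (k - 1)) := by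
          apply mul_le_mul_of_nonneg_left ?_ (by norm_num)
          exact tail_pow k hk y N
      _ = 8 / y ^ (k - 1) := by
          rw [max_eq_left hy]
          ring
  have hfin : (4 : ℝ) / y ^ (k - 1) + 8 / y ^ (k - 1) = 12 / y ^ (k - 1) := by ring
  linarith

open Classical in
lemma lcm_count_le (k : ℕ) (hk : 2 ≤ k) (N : ℕ) (hN : 0 < N) (y z : ℝ) (hz : 1 ≤ z) :
    (((((Icc 1 N).filter (fun d : ℕ => y ≤ (d : ℝ) ∧ (d : ℝ) < z)) ×ˢ
       ((Icc 1 N).filter (fun d : ℕ => y ≤ (d : ℝ) ∧ (d : ℝ) < z))).filter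
        (fun p : ℕ × ℕ => Nat.lcm p.1 p.2 ^ k ≤ N)).card : ℝ)
      ≤ (N : ℝ) ^ (1 / (k : ℝ)) * ((1 + Real.log z) * (1 + Real.log z)) := by
  set X : ℝ := (N : ℝ) ^ (1 / (k : ℝ)) with hX
  have hX0 : 0 ≤ X := Real.rpow_nonneg (by positivity) _
  set s : Finset ℕ := Icc 1 N with hs
  set E : Finset ℕ := s.filter (fun d : ℕ => y ≤ (d : ℝ) ∧ (d : ℝ) < z) with hE
  set T : Finset ((ℕ × ℕ) × ℕ) := ((s ×ˢ s) ×ˢ s).filter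
      (fun t => (t.1.1 : ℝ) < z ∧ (t.1.2 : ℝ) < z ∧ ((t.1.1 * t.1.2 * t.2 : ℕ) : ℝ) ≤ X)
      with hT
  have hmemE : ∀ d ∈ E, 1 ≤ d ∧ d ≤ N ∧ (d : ℝ) < z := by
    intro d hd
    simp only [hE, hs, mem_filter, mem_Icc] at hd
    exact ⟨hd.1.1, hd.1.2, hd.2.2⟩
  -- injection into triples
  have step1 : ((E ×ˢ E).filter (fun p : ℕ × ℕ => Nat.lcm p.1 p.2 ^ k ≤ N)).card ≤ T.card := by
    apply Finset.card_le_card_of_injOn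
      (fun p : ℕ × ℕ => ((p.1 / Nat.gcd p.1 p.2, p.2 / Nat.gcd p.1 p.2), Nat.gcd p.1 p.2))
    · intro p hp
      simp only [mem_coe, mem_filter, mem_product] at hp
      obtain ⟨⟨hp1, hp2⟩, hpk⟩ := hp
      obtain ⟨h11, h12, h13⟩ := hmemE _ hp1
      obtain ⟨h21, h22, h23⟩ := hmemE _ hp2
      have hg : 0 < Nat.gcd p.1 p.2 := Nat.gcd_pos_of_pos_left _ (by omega)
      have hgd1 : Nat.gcd p.1 p.2 ∣ p.1 := Nat.gcd_dvd_left _ _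
      have hgd2 : Nat.gcd p.1 p.2 ∣ p.2 := Nat.gcd_dvd_right _ _
      have hlcm : p.1 / Nat.gcd p.1 p.2 * (p.2 / Nat.gcd p.1 p.2) * Nat.gcd p.1 p.2
          = Nat.lcm p.1 p.2 := by
        rw [mul_comm, ← mul_assoc, Nat.mul_div_cancel' hgd1,
          ← Nat.mul_div_assoc _ hgd2]
        rfl
      have hlcmX : ((Nat.lcm p.1 p.2 : ℕ) : ℝ) ≤ X := by
        have h1 : ((Nat.lcm p.1 p.2 : ℕ) : ℝ) ^ k ≤ (N : ℝ) := by exact_mod_cast hpk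
        have hL0 : (0 : ℝ) ≤ ((Nat.lcm p.1 p.2 : ℕ) : ℝ) := by positivity
        have h2 : (((Nat.lcm p.1 p.2 : ℕ) : ℝ) ^ k) ^ (1 / (k : ℝ)) ≤ (N : ℝ) ^ (1 / (k : ℝ)) :=
          Real.rpow_le_rpow (by positivity) h1 (by positivity)
        have h3 : (((Nat.lcm p.1 p.2 : ℕ) : ℝ) ^ k) ^ (1 / (k : ℝ))
            = ((Nat.lcm p.1 p.2 : ℕ) : ℝ) := by
          rw [← Real.rpow_natCast ((Nat.lcm p.1 p.2 : ℕ) : ℝ) k, ← Real.rpow_mul hL0]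
          rw [mul_one_div, div_self (by positivity : (k : ℝ) ≠ 0), Real.rpow_one]
        rw [← h3]
        exact h2
      simp only [mem_coe, hT, mem_filter, mem_product, mem_Icc, hs]
      have hd1 : p.1 / Nat.gcd p.1 p.2 ≤ p.1 := Nat.div_le_self _ _
      have hd2 : p.2 / Nat.gcd p.1 p.2 ≤ p.2 := Nat.div_le_self _ _
      refine ⟨⟨⟨⟨Nat.div_pos (Nat.le_of_dvd (by omega) hgd1) hg, le_trans hd1 h12⟩,
        ⟨Nat.div_pos (Nat.le_of_dvd (by omega) hgd2) hg, le_trans hd2 h22⟩⟩,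
        ⟨hg, le_trans (Nat.le_of_dvd (by omega) hgd1) h12⟩⟩, ?_, ?_, ?_⟩
      · calc ((p.1 / Nat.gcd p.1 p.2 : ℕ) : ℝ) ≤ (p.1 : ℝ) := by exact_mod_cast hd1
          _ < z := h13
      · calc ((p.2 / Nat.gcd p.1 p.2 : ℕ) : ℝ) ≤ (p.2 : ℝ) := by exact_mod_cast hd2
          _ < z := h23
      · rw [hlcm]
        exact hlcmX
    · intro p hp p' hp' heq
      simp only [Prod.mk.injEq] at heq
      obtain ⟨⟨ha, hb⟩, hg⟩ := heq
      have he1 : Nat.gcd p.1 p.2 * (p.1 / Nat.gcd p.1 p.2) = p.1 :=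
        Nat.mul_div_cancel' (Nat.gcd_dvd_left _ _)
      have he2 : Nat.gcd p.1 p.2 * (p.2 / Nat.gcd p.1 p.2) = p.2 :=
        Nat.mul_div_cancel' (Nat.gcd_dvd_right _ _)
      have he1' : Nat.gcd p'.1 p'.2 * (p'.1 / Nat.gcd p'.1 p'.2) = p'.1 :=
        Nat.mul_div_cancel' (Nat.gcd_dvd_left _ _)
      have he2' : Nat.gcd p'.1 p'.2 * (p'.2 / Nat.gcd p'.1 p'.2) = p'.2 :=
        Nat.mul_div_cancel' (Nat.gcd_dvd_right _ _)
      have hp1 : p.1 = p'.1 := by rw [← he1, ← he1', ha, hg]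
      have hp2 : p.2 = p'.2 := by rw [← he2, ← he2', hb, hg]
      exact Prod.ext hp1 hp2
  -- count the triples
  have step2 : (T.card : ℝ)
      ≤ ∑ v ∈ s ×ˢ s, (if (v.1 : ℝ) < z ∧ (v.2 : ℝ) < z
          then X * ((v.1 : ℝ))⁻¹ * ((v.2 : ℝ))⁻¹ else 0) := by
    have hTcard : (T.card : ℝ) = ∑ v ∈ s ×ˢ s,
        ((s.filter (fun g : ℕ => (v.1 : ℝ) < z ∧ (v.2 : ℝ) < z ∧
          ((v.1 * v.2 * g : ℕ) : ℝ) ≤ X)).card : ℝ) := by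
      rw [hT]
      rw [← Finset.sum_boole]
      rw [Finset.sum_product]
      apply Finset.sum_congr rfl
      intro v _
      rw [Finset.sum_boole]
    rw [hTcard]
    apply Finset.sum_le_sum
    intro v hv
    simp only [mem_product] at hv
    have hv1 : 1 ≤ v.1 ∧ v.1 ≤ N := by have := hv.1; rw [hs, mem_Icc] at this; exact this
    have hv2 : 1 ≤ v.2 ∧ v.2 ≤ N := by have := hv.2; rw [hs, mem_Icc] at this; exact this
    have hv1R : (1 : ℝ) ≤ (v.1 : ℝ) := by exact_mod_cast hv1.1
    have hv2R : (1 : ℝ) ≤ (v.2 : ℝ) := by exact_mod_cast hv2.1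
    by_cases hcond : (v.1 : ℝ) < z ∧ (v.2 : ℝ) < z
    · rw [if_pos hcond]
      have hab : (0 : ℝ) < (v.1 : ℝ) * (v.2 : ℝ) := by positivity
      have hsub : s.filter (fun g : ℕ => (v.1 : ℝ) < z ∧ (v.2 : ℝ) < z ∧
          ((v.1 * v.2 * g : ℕ) : ℝ) ≤ X) ⊆ Icc 1 ⌊X / ((v.1 : ℝ) * (v.2 : ℝ))⌋₊ := by
        intro g hg
        have hgf := mem_filter.mp hg
        have hgs := hgf.1
        rw [hs, mem_Icc] at hgs
        rw [mem_Icc]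
        refine ⟨hgs.1, Nat.le_floor ?_⟩
        have hX3 := hgf.2.2.2
        push_cast at hX3
        rw [le_div_iff₀ hab]
        calc (g : ℝ) * ((v.1 : ℝ) * (v.2 : ℝ)) = (v.1 : ℝ) * (v.2 : ℝ) * g := by ring
          _ ≤ X := hX3
      calc ((s.filter (fun g : ℕ => (v.1 : ℝ) < z ∧ (v.2 : ℝ) < z ∧
            ((v.1 * v.2 * g : ℕ) : ℝ) ≤ X)).card : ℝ)
          ≤ ((Icc 1 ⌊X / ((v.1 : ℝ) * (v.2 : ℝ))⌋₊).card : ℝ) := by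
            exact_mod_cast card_le_card hsub
        _ = (⌊X / ((v.1 : ℝ) * (v.2 : ℝ))⌋₊ : ℝ) := by rw [Nat.card_Icc]; simp
        _ ≤ X / ((v.1 : ℝ) * (v.2 : ℝ)) := Nat.floor_le (by positivity)
        _ = X * ((v.1 : ℝ))⁻¹ * ((v.2 : ℝ))⁻¹ := by
            rw [div_eq_mul_inv, mul_inv, mul_assoc]
    · rw [if_neg hcond]
      have : s.filter (fun g : ℕ => (v.1 : ℝ) < z ∧ (v.2 : ℝ) < z ∧
          ((v.1 * v.2 * g : ℕ) : ℝ) ≤ X) = ∅ := by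
        apply Finset.filter_eq_empty_iff.mpr
        intro g _
        intro hcon
        exact hcond ⟨hcon.1, hcon.2.1⟩
      rw [this]
      simp
  -- factor the double sum
  have step3 : ∑ v ∈ s ×ˢ s, (if (v.1 : ℝ) < z ∧ (v.2 : ℝ) < z
        then X * ((v.1 : ℝ))⁻¹ * ((v.2 : ℝ))⁻¹ else 0)
      = X * ((∑ a ∈ s, (if (a : ℝ) < z then ((a : ℝ))⁻¹ else 0)) *
             (∑ c ∈ s, (if (c : ℝ) < z then ((c : ℝ))⁻¹ else 0))) := by
    rw [Finset.sum_product]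
    calc ∑ a ∈ s, ∑ c ∈ s, (if (a : ℝ) < z ∧ (c : ℝ) < z
            then X * ((a : ℝ))⁻¹ * ((c : ℝ))⁻¹ else 0)
        = ∑ a ∈ s, ∑ c ∈ s, (X * (if (a : ℝ) < z then ((a : ℝ))⁻¹ else 0)) *
            (if (c : ℝ) < z then ((c : ℝ))⁻¹ else 0) := by
          apply Finset.sum_congr rfl
          intro a _
          apply Finset.sum_congr rfl
          intro c _
          by_cases h1 : (a : ℝ) < z
          · by_cases h2 : (c : ℝ) < z
            · simp only [h1, h2, and_self, if_true, ite_true]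
            · simp [h1, h2]
          · simp [h1]
      _ = (∑ a ∈ s, X * (if (a : ℝ) < z then ((a : ℝ))⁻¹ else 0)) *
          (∑ c ∈ s, (if (c : ℝ) < z then ((c : ℝ))⁻¹ else 0)) :=
          (Finset.sum_mul_sum _ _ _ _).symm
      _ = X * ((∑ a ∈ s, (if (a : ℝ) < z then ((a : ℝ))⁻¹ else 0)) *
            (∑ c ∈ s, (if (c : ℝ) < z then ((c : ℝ))⁻¹ else 0))) := by
          rw [← Finset.mul_sum]
          ring
  have hH : ∑ a ∈ s, (if (a : ℝ) < z then ((a : ℝ))⁻¹ else 0) ≤ 1 + Real.log z := by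
    rw [← Finset.sum_filter, hs]
    exact harmonic_filter N z hz
  have hH0 : 0 ≤ ∑ a ∈ s, (if (a : ℝ) < z then ((a : ℝ))⁻¹ else 0) := by
    apply Finset.sum_nonneg
    intro a _
    split <;> positivity
  have hlog0 : 0 ≤ 1 + Real.log z := by
    have := Real.log_nonneg hz
    linarith
  calc (((E ×ˢ E).filter (fun p : ℕ × ℕ => Nat.lcm p.1 p.2 ^ k ≤ N)).card : ℝ)
      ≤ (T.card : ℝ) := by exact_mod_cast step1
    _ ≤ ∑ v ∈ s ×ˢ s, (if (v.1 : ℝ) < z ∧ (v.2 : ℝ) < z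
          then X * ((v.1 : ℝ))⁻¹ * ((v.2 : ℝ))⁻¹ else 0) := step2
    _ = X * ((∑ a ∈ s, (if (a : ℝ) < z then ((a : ℝ))⁻¹ else 0)) *
             (∑ c ∈ s, (if (c : ℝ) < z then ((c : ℝ))⁻¹ else 0))) := step3
    _ ≤ X * ((1 + Real.log z) * (1 + Real.log z)) := by
        apply mul_le_mul_of_nonneg_left ?_ hX0
        exact mul_le_mul hH hH hH0 hlog0

open Classical in
theorem b_short_interval_L2 (k : ℕ) (hk : 2 ≤ k) :
    ∃ C : ℝ, 0 < C ∧ ∀ N : ℕ, 0 < N → ∀ K y z : ℝ,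
      1 ≤ K → K ≤ (N : ℝ) → 1 ≤ y → y < z →
      (∑ n ∈ (Finset.Icc 1 N).filter (fun n : ℕ => (N : ℝ) - K < (n : ℝ)),
          ((b k y z n : ℝ)) ^ 2)
        ≤ C * (K * y ^ ((1 : ℝ) - (k : ℝ)) +
            (N : ℝ) ^ (1 / (k : ℝ)) * (Real.log z) ^ 3) := by
  refine ⟨100, by norm_num, ?_⟩
  intro N hN K y z hK1 hKN hy hyz
  have hy0 : (0 : ℝ) < y := by linarith
  have hz1 : (1 : ℝ) ≤ z := by linarith
  set A : Finset ℕ := (Finset.Icc 1 N).filter (fun n : ℕ => (N : ℝ) - K < (n : ℝ)) with hA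
  set E : Finset ℕ := (Icc 1 N).filter (fun d : ℕ => y ≤ (d : ℝ) ∧ (d : ℝ) < z) with hEdef
  set X : ℝ := (N : ℝ) ^ (1 / (k : ℝ)) with hX
  have hX0 : 0 ≤ X := Real.rpow_nonneg (by positivity) _
  have hmemE : ∀ d ∈ E, 1 ≤ d ∧ d ≤ N ∧ y ≤ (d : ℝ) := by
    intro d hd
    rw [hEdef, mem_filter, mem_Icc] at hd
    exact ⟨hd.1.1, hd.1.2, hd.2.1⟩
  -- notation for the lcm
  have hL1 : ∀ p : ℕ × ℕ, p ∈ E ×ˢ E → 1 ≤ Nat.lcm p.1 p.2 ^ k := by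
    intro p hp
    rw [mem_product] at hp
    obtain ⟨h1, _, _⟩ := hmemE _ hp.1
    obtain ⟨h2, _, _⟩ := hmemE _ hp.2
    have h : 0 < Nat.lcm p.1 p.2 := Nat.pos_of_ne_zero (Nat.lcm_ne_zero (by omega) (by omega))
    exact Nat.one_le_pow _ _ h
  -- step A : expansion
  have expand : ∑ n ∈ A, ((b k y z n : ℝ)) ^ 2
      ≤ ∑ p ∈ E ×ˢ E, ((A.filter (fun n : ℕ => p.1 ^ k ∣ n ∧ p.2 ^ k ∣ n)).card : ℝ) := by
    calc ∑ n ∈ A, ((b k y z n : ℝ)) ^ 2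
        ≤ ∑ n ∈ A, ∑ p ∈ E ×ˢ E, (if p.1 ^ k ∣ n ∧ p.2 ^ k ∣ n then (1 : ℝ) else 0) := by
          apply Finset.sum_le_sum
          intro n hn
          have hn' : n ∈ Finset.Icc 1 N := (mem_filter.mp hn).1
          exact b_sq_le k (by omega) y z N n hn'
      _ = ∑ p ∈ E ×ˢ E, ∑ n ∈ A, (if p.1 ^ k ∣ n ∧ p.2 ^ k ∣ n then (1 : ℝ) else 0) :=
          Finset.sum_comm
      _ = ∑ p ∈ E ×ˢ E, ((A.filter (fun n : ℕ => p.1 ^ k ∣ n ∧ p.2 ^ k ∣ n)).card : ℝ) := by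
          apply Finset.sum_congr rfl
          intro p _
          rw [Finset.sum_boole]
  -- step B : replace by lcm counts
  have hc' : ∀ p ∈ E ×ˢ E, ((A.filter (fun n : ℕ => p.1 ^ k ∣ n ∧ p.2 ^ k ∣ n)).card : ℝ)
      ≤ ((A.filter (fun n : ℕ => Nat.lcm p.1 p.2 ^ k ∣ n)).card : ℝ) := by
    intro p hp
    rw [mem_product] at hp
    obtain ⟨h1, _, _⟩ := hmemE _ hp.1
    obtain ⟨h2, _, _⟩ := hmemE _ hp.2
    have hsub : A.filter (fun n : ℕ => p.1 ^ k ∣ n ∧ p.2 ^ k ∣ n)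
        ⊆ A.filter (fun n : ℕ => Nat.lcm p.1 p.2 ^ k ∣ n) := by
      intro n hn
      rw [mem_filter] at hn ⊢
      refine ⟨hn.1, ?_⟩
      rw [← nat_lcm_pow p.1 p.2 k (by omega) (by omega)]
      exact Nat.lcm_dvd hn.2.1 hn.2.2
    exact_mod_cast card_le_card hsub
  have expand2 : ∑ n ∈ A, ((b k y z n : ℝ)) ^ 2
      ≤ ∑ p ∈ E ×ˢ E, ((A.filter (fun n : ℕ => Nat.lcm p.1 p.2 ^ k ∣ n)).card : ℝ) :=
    expand.trans (Finset.sum_le_sum hc')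
  -- step C : split according to the size of the lcm
  rw [← Finset.sum_filter_add_sum_filter_not (E ×ˢ E)
    (fun p : ℕ × ℕ => ((Nat.lcm p.1 p.2 ^ k : ℕ) : ℝ) ≤ K)
    (fun p : ℕ × ℕ => ((A.filter (fun n : ℕ => Nat.lcm p.1 p.2 ^ k ∣ n)).card : ℝ))] at expand2
  -- bound on the first part
  have hbound1 : ∑ p ∈ (E ×ˢ E).filter (fun p : ℕ × ℕ => ((Nat.lcm p.1 p.2 ^ k : ℕ) : ℝ) ≤ K),
        ((A.filter (fun n : ℕ => Nat.lcm p.1 p.2 ^ k ∣ n)).card : ℝ)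
      ≤ 36 * K / y ^ (k - 1) := by
    have hterm : ∀ p ∈ (E ×ˢ E).filter
        (fun p : ℕ × ℕ => ((Nat.lcm p.1 p.2 ^ k : ℕ) : ℝ) ≤ K),
        ((A.filter (fun n : ℕ => Nat.lcm p.1 p.2 ^ k ∣ n)).card : ℝ)
        ≤ 3 * K * (((Nat.lcm p.1 p.2 : ℕ) : ℝ) ^ k)⁻¹ := by
      intro p hp
      have hpf := mem_filter.mp hp
      have hLpos : 1 ≤ Nat.lcm p.1 p.2 ^ k := hL1 p hpf.1
      have h1 := count_dvd_interval N K hK1 hKN (Nat.lcm p.1 p.2 ^ k) hLpos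
      have hcast : ((Nat.lcm p.1 p.2 ^ k : ℕ) : ℝ) = ((Nat.lcm p.1 p.2 : ℕ) : ℝ) ^ k := by
        push_cast
        ring
      have hLR : (0 : ℝ) < ((Nat.lcm p.1 p.2 : ℕ) : ℝ) ^ k := by
        rw [← hcast]
        exact_mod_cast hLpos
      have h2 : (1 : ℝ) ≤ K / ((Nat.lcm p.1 p.2 : ℕ) : ℝ) ^ k := by
        rw [le_div_iff₀ hLR, one_mul, ← hcast]
        exact hpf.2
      calc ((A.filter (fun n : ℕ => Nat.lcm p.1 p.2 ^ k ∣ n)).card : ℝ)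
          ≤ 2 * K / ((Nat.lcm p.1 p.2 ^ k : ℕ) : ℝ) + 1 := h1
        _ = 2 * (K / ((Nat.lcm p.1 p.2 : ℕ) : ℝ) ^ k) + 1 := by rw [hcast]; ring
        _ ≤ 2 * (K / ((Nat.lcm p.1 p.2 : ℕ) : ℝ) ^ k) + K / ((Nat.lcm p.1 p.2 : ℕ) : ℝ) ^ k := by
            linarith
        _ = 3 * K * (((Nat.lcm p.1 p.2 : ℕ) : ℝ) ^ k)⁻¹ := by
            rw [div_eq_mul_inv]
            ring
    calc ∑ p ∈ (E ×ˢ E).filter (fun p : ℕ × ℕ => ((Nat.lcm p.1 p.2 ^ k : ℕ) : ℝ) ≤ K),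
          ((A.filter (fun n : ℕ => Nat.lcm p.1 p.2 ^ k ∣ n)).card : ℝ)
        ≤ ∑ p ∈ (E ×ˢ E).filter (fun p : ℕ × ℕ => ((Nat.lcm p.1 p.2 ^ k : ℕ) : ℝ) ≤ K),
          3 * K * (((Nat.lcm p.1 p.2 : ℕ) : ℝ) ^ k)⁻¹ := Finset.sum_le_sum hterm
      _ ≤ ∑ p ∈ E ×ˢ E, 3 * K * (((Nat.lcm p.1 p.2 : ℕ) : ℝ) ^ k)⁻¹ := by
          apply sum_le_sum_of_subset_of_nonneg (filter_subset _ _)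
          intro p _ _
          positivity
      _ = 3 * K * ∑ p ∈ E ×ˢ E, (((Nat.lcm p.1 p.2 : ℕ) : ℝ) ^ k)⁻¹ := by
          rw [Finset.mul_sum]
      _ ≤ 3 * K * (12 / y ^ (k - 1)) := by
          apply mul_le_mul_of_nonneg_left ?_ (by positivity)
          exact lcm_sum_le k hk N y z hy
      _ = 36 * K / y ^ (k - 1) := by ring
  -- bound on the second part
  have hbound2 : ∑ p ∈ (E ×ˢ E).filter
        (fun p : ℕ × ℕ => ¬ ((Nat.lcm p.1 p.2 ^ k : ℕ) : ℝ) ≤ K),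
        ((A.filter (fun n : ℕ => Nat.lcm p.1 p.2 ^ k ∣ n)).card : ℝ)
      ≤ ((((E ×ˢ E).filter (fun p : ℕ × ℕ => ¬ ((Nat.lcm p.1 p.2 ^ k : ℕ) : ℝ) ≤ K)).filter
          (fun p : ℕ × ℕ => Nat.lcm p.1 p.2 ^ k ≤ N)).card : ℝ) := by
    have hterm : ∀ p ∈ (E ×ˢ E).filter
        (fun p : ℕ × ℕ => ¬ ((Nat.lcm p.1 p.2 ^ k : ℕ) : ℝ) ≤ K),
        ((A.filter (fun n : ℕ => Nat.lcm p.1 p.2 ^ k ∣ n)).card : ℝ)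
        ≤ (if Nat.lcm p.1 p.2 ^ k ≤ N then (1 : ℝ) else 0) := by
      intro p hp
      have hpf := mem_filter.mp hp
      have hKL : K < ((Nat.lcm p.1 p.2 ^ k : ℕ) : ℝ) := lt_of_not_ge hpf.2
      by_cases hLN : Nat.lcm p.1 p.2 ^ k ≤ N
      · rw [if_pos hLN]
        exact_mod_cast count_dvd_interval_le_one N K (Nat.lcm p.1 p.2 ^ k) hKL
      · rw [if_neg hLN]
        have : A.filter (fun n : ℕ => Nat.lcm p.1 p.2 ^ k ∣ n) = ∅ := by
          apply Finset.filter_eq_empty_iff.mpr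
          intro n hn
          have hn' : 1 ≤ n ∧ n ≤ N := by
            have := (mem_filter.mp hn).1
            rw [mem_Icc] at this
            exact this
          intro hdvd
          exact hLN (le_trans (Nat.le_of_dvd (by omega) hdvd) hn'.2)
        rw [this]
        simp
    calc ∑ p ∈ (E ×ˢ E).filter
          (fun p : ℕ × ℕ => ¬ ((Nat.lcm p.1 p.2 ^ k : ℕ) : ℝ) ≤ K),
          ((A.filter (fun n : ℕ => Nat.lcm p.1 p.2 ^ k ∣ n)).card : ℝ)
        ≤ ∑ p ∈ (E ×ˢ E).filter
          (fun p : ℕ × ℕ => ¬ ((Nat.lcm p.1 p.2 ^ k : ℕ) : ℝ) ≤ K),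
          (if Nat.lcm p.1 p.2 ^ k ≤ N then (1 : ℝ) else 0) := Finset.sum_le_sum hterm
      _ = _ := by rw [Finset.sum_boole]
  -- now two cases on z
  have hlogz0 : 0 ≤ Real.log z := Real.log_nonneg hz1
  have hA1 : 0 ≤ K * y ^ ((1 : ℝ) - (k : ℝ)) := by positivity
  have hB1 : 0 ≤ X * (Real.log z) ^ 3 := by positivity
  have hypow : y ^ ((1 : ℝ) - (k : ℝ)) = (y ^ (k - 1 : ℕ))⁻¹ := by
    have hcast : (1 : ℝ) - (k : ℝ) = -(((k - 1 : ℕ) : ℝ)) := by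
      rw [Nat.cast_sub (by omega : 1 ≤ k)]
      push_cast
      ring
    rw [hcast, Real.rpow_neg (le_of_lt hy0), Real.rpow_natCast]
  have hfirst : 36 * K / y ^ (k - 1) = 36 * (K * y ^ ((1 : ℝ) - (k : ℝ))) := by
    rw [hypow]
    field_simp
  by_cases hz2 : z ≤ 2
  · -- small z : second part is empty
    have hempty : (((E ×ˢ E).filter (fun p : ℕ × ℕ => ¬ ((Nat.lcm p.1 p.2 ^ k : ℕ) : ℝ) ≤ K)).filter
          (fun p : ℕ × ℕ => Nat.lcm p.1 p.2 ^ k ≤ N)) = ∅ := by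
      apply Finset.filter_eq_empty_iff.mpr
      intro p hp
      have hpf := mem_filter.mp hp
      rw [mem_product] at *
      obtain ⟨hp1, hp2⟩ := hpf.1
      obtain ⟨h11, _, h13⟩ := hmemE _ hp1
      obtain ⟨h21, _, h23⟩ := hmemE _ hp2
      have hd1z : (p.1 : ℝ) < z := (mem_filter.mp hp1).2.2
      have hd2z : (p.2 : ℝ) < z := (mem_filter.mp hp2).2.2
      have hp1eq : p.1 = 1 := by
        have : (p.1 : ℝ) < 2 := lt_of_lt_of_le hd1z hz2
        have : p.1 < 2 := by exact_mod_cast this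
        omega
      have hp2eq : p.2 = 1 := by
        have : (p.2 : ℝ) < 2 := lt_of_lt_of_le hd2z hz2
        have : p.2 < 2 := by exact_mod_cast this
        omega
      have : Nat.lcm p.1 p.2 = 1 := by rw [hp1eq, hp2eq]; rfl
      have hcon : ((Nat.lcm p.1 p.2 ^ k : ℕ) : ℝ) = 1 := by rw [this]; simp
      intro _
      exact hpf.2 (by rw [hcon]; exact hK1)
    have h0 : ∑ p ∈ (E ×ˢ E).filter
          (fun p : ℕ × ℕ => ¬ ((Nat.lcm p.1 p.2 ^ k : ℕ) : ℝ) ≤ K),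
          ((A.filter (fun n : ℕ => Nat.lcm p.1 p.2 ^ k ∣ n)).card : ℝ) ≤ 0 := by
      refine hbound2.trans ?_
      rw [hempty]
      simp
    calc ∑ n ∈ A, ((b k y z n : ℝ)) ^ 2
        ≤ 36 * K / y ^ (k - 1) + 0 := by linarith [expand2, hbound1, h0]
      _ = 36 * (K * y ^ ((1 : ℝ) - (k : ℝ))) := by rw [hfirst]; ring
      _ ≤ 100 * (K * y ^ ((1 : ℝ) - (k : ℝ)) + X * (Real.log z) ^ 3) := by linarith
  · -- large z
    push_neg at hz2
    have hlog2 : (0.6931471803 : ℝ) < Real.log 2 := Real.log_two_gt_d9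
    have hlogz : (0.6931471803 : ℝ) < Real.log z :=
      lt_of_lt_of_le hlog2 (Real.log_le_log (by norm_num) (le_of_lt hz2))
    have hcount : ((((E ×ˢ E).filter
          (fun p : ℕ × ℕ => ¬ ((Nat.lcm p.1 p.2 ^ k : ℕ) : ℝ) ≤ K)).filter
          (fun p : ℕ × ℕ => Nat.lcm p.1 p.2 ^ k ≤ N)).card : ℝ)
        ≤ X * ((1 + Real.log z) * (1 + Real.log z)) := by
      have hsub : (((E ×ˢ E).filter
          (fun p : ℕ × ℕ => ¬ ((Nat.lcm p.1 p.2 ^ k : ℕ) : ℝ) ≤ K)).filter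
          (fun p : ℕ × ℕ => Nat.lcm p.1 p.2 ^ k ≤ N))
          ⊆ (E ×ˢ E).filter (fun p : ℕ × ℕ => Nat.lcm p.1 p.2 ^ k ≤ N) := by
        intro p hp
        have h1 := mem_filter.mp hp
        have h2 := mem_filter.mp h1.1
        exact mem_filter.mpr ⟨h2.1, h1.2⟩
      calc ((((E ×ˢ E).filter
            (fun p : ℕ × ℕ => ¬ ((Nat.lcm p.1 p.2 ^ k : ℕ) : ℝ) ≤ K)).filter
            (fun p : ℕ × ℕ => Nat.lcm p.1 p.2 ^ k ≤ N)).card : ℝ)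
          ≤ (((E ×ˢ E).filter (fun p : ℕ × ℕ => Nat.lcm p.1 p.2 ^ k ≤ N)).card : ℝ) := by
            exact_mod_cast card_le_card hsub
        _ ≤ X * ((1 + Real.log z) * (1 + Real.log z)) := lcm_count_le k hk N hN y z hz1
    have hlogcube : X * ((1 + Real.log z) * (1 + Real.log z)) ≤ 10 * (X * (Real.log z) ^ 3) := by
      have h1 : (1 + Real.log z) * (1 + Real.log z) ≤ 10 * (Real.log z) ^ 3 := by
        set t := Real.log z with ht
        nlinarith [sq_nonneg (t - 1), sq_nonneg t, sq_nonneg (t + 1), mul_pos (lt_trans (by norm_num) hlogz) (lt_trans (by norm_num) hlogz)]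
      calc X * ((1 + Real.log z) * (1 + Real.log z)) ≤ X * (10 * (Real.log z) ^ 3) :=
            mul_le_mul_of_nonneg_left h1 hX0
        _ = 10 * (X * (Real.log z) ^ 3) := by ring
    calc ∑ n ∈ A, ((b k y z n : ℝ)) ^ 2
        ≤ 36 * K / y ^ (k - 1) + X * ((1 + Real.log z) * (1 + Real.log z)) := by
          linarith [expand2, hbound1, hbound2, hcount]
      _ ≤ 36 * (K * y ^ ((1 : ℝ) - (k : ℝ))) + 10 * (X * (Real.log z) ^ 3) := by
          rw [hfirst] at *
          linarith [hlogcube]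
      _ ≤ 100 * (K * y ^ ((1 : ℝ) - (k : ℝ)) + X * (Real.log z) ^ 3) := by linarith
end

section
/- Let k ≥ 2 be an integer. There is a constant C = C(k) > 0 such that for any real numbers y, z with 1 ≤ y < z and any integer N ≥ 1, we have ∑_{n ≤ N} |b_{y,z}(n)|² ≤ C · N y^{1-k}. -/
open Finset

lemma gcd_pow_eq (a b k : ℕ) : Nat.gcd (a ^ k) (b ^ k) = Nat.gcd a b ^ k := by
  rcases Nat.eq_zero_or_pos (Nat.gcd a b) with h | h
  · rw [Nat.gcd_eq_zero_iff] at h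
    rcases Nat.eq_zero_or_pos k with rfl | hk
    · simp
    · simp [h.1, h.2, Nat.zero_pow hk]
  · have hcop := Nat.coprime_div_gcd_div_gcd (m := a) (n := b) h
    set g := Nat.gcd a b with hg
    have ha : a = g * (a / g) := (Nat.mul_div_cancel' (Nat.gcd_dvd_left a b)).symm
    have hb : b = g * (b / g) := (Nat.mul_div_cancel' (Nat.gcd_dvd_right a b)).symm
    rw [ha, hb, mul_pow, mul_pow, Nat.gcd_mul_left, Nat.Coprime.gcd_eq_one (Nat.Coprime.pow k k hcop), mul_one]

lemma sum_inv_sq (m N : ℕ) (hm : 1 ≤ m) :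
    ∑ a ∈ Icc m N, ((a : ℝ) ^ 2)⁻¹ ≤ 2 / m := by
  have hm' : (1:ℝ) ≤ m := by exact_mod_cast hm
  have h0 : (0:ℝ) < m := by linarith
  rcases le_or_gt m N with hmN | hmN
  · have key : ∀ M : ℕ, m ≤ M → ∑ a ∈ Icc m M, ((a : ℝ) ^ 2)⁻¹ ≤ 2 / m - 1 / M := by
      intro M hM
      induction M, hM using Nat.le_induction with
      | base =>
        rw [Finset.Icc_self, Finset.sum_singleton]
        have : 2/(m:ℝ) - 1/m = 1/m := by ring
        rw [this, inv_eq_one_div]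
        apply one_div_le_one_div_of_le h0
        nlinarith
      | succ M hM ih =>
        rw [Finset.sum_Icc_succ_top (by omega)]
        have hM0 : (0:ℝ) < M := by exact_mod_cast (by omega : 0 < M)
        have h1 : (((M:ℝ) + 1) ^ 2)⁻¹ ≤ 1/(M:ℝ) - 1/((M:ℝ)+1) := by
          rw [div_sub_div _ _ hM0.ne' (by positivity), inv_eq_one_div,
            div_le_div_iff₀ (by positivity) (by positivity)]
          nlinarith
        push_cast
        linarith
    have hN0 : (0:ℝ) < N := by exact_mod_cast (by omega : 0 < N)
    have : (0:ℝ) < 1 / N := by positivity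
    linarith [key N hmN]
  · rw [Finset.Icc_eq_empty (by omega)]
    simp
    positivity

lemma sum_inv_pow (k m N : ℕ) (hk : 2 ≤ k) (hm : 1 ≤ m) :
    ∑ a ∈ Icc m N, ((a : ℝ) ^ k)⁻¹ ≤ 2 / (m : ℝ) ^ (k - 1) := by
  have hm0 : (0:ℝ) < m := by exact_mod_cast hm
  have step : ∀ a ∈ Icc m N, ((a : ℝ) ^ k)⁻¹ ≤ ((m:ℝ) ^ (k-2))⁻¹ * ((a:ℝ)^2)⁻¹ := by
    intro a ha
    rw [mem_Icc] at ha
    have ha0 : (0:ℝ) < a := by exact_mod_cast (by omega : 0 < a)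
    rw [← mul_inv]
    apply inv_anti₀ (by positivity)
    calc (m:ℝ) ^ (k-2) * (a:ℝ)^2 ≤ (a:ℝ) ^ (k-2) * (a:ℝ)^2 := by
          apply mul_le_mul_of_nonneg_right _ (by positivity)
          exact pow_le_pow_left₀ (le_of_lt hm0) (by exact_mod_cast ha.1) _
      _ = (a:ℝ) ^ k := by rw [← pow_add]; congr 1; omega
  calc ∑ a ∈ Icc m N, ((a : ℝ) ^ k)⁻¹
      ≤ ∑ a ∈ Icc m N, ((m:ℝ) ^ (k-2))⁻¹ * ((a:ℝ)^2)⁻¹ := Finset.sum_le_sum step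
    _ = ((m:ℝ) ^ (k-2))⁻¹ * ∑ a ∈ Icc m N, ((a:ℝ)^2)⁻¹ := by rw [Finset.mul_sum]
    _ ≤ ((m:ℝ) ^ (k-2))⁻¹ * (2 / m) := by
        apply mul_le_mul_of_nonneg_left (sum_inv_sq m N hm) (by positivity)
    _ = 2 / (m : ℝ) ^ (k - 1) := by
        have h2 : (m:ℝ) * (m:ℝ)^(k-2) = (m:ℝ)^(k-1) := by
          rw [← pow_succ']; congr 1; omega
        rw [div_eq_mul_inv, div_eq_mul_inv, mul_comm, mul_assoc, ← mul_inv, h2]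

open Classical in
lemma Ag_bound (k : ℕ) (hk : 2 ≤ k) (y : ℝ) (hy : 1 ≤ y) (N g : ℕ) (hg : 1 ≤ g) :
    ∑ d ∈ ((Icc 1 N).filter (fun d : ℕ => y ≤ (d:ℝ))).filter (fun d => g ∣ d), ((d:ℝ)^k)⁻¹
      ≤ ((g:ℝ)^k)⁻¹ * (2 / ((⌈y/(g:ℝ)⌉₊:ℝ))^(k-1)) := by
  have hg0 : (0:ℝ) < g := by exact_mod_cast hg
  set m := ⌈y/(g:ℝ)⌉₊ with hmdef
  have hm : 1 ≤ m := by
    rw [hmdef]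
    exact Nat.one_le_iff_ne_zero.mpr (by
      simp only [ne_eq, Nat.ceil_eq_zero, not_le]
      positivity)
  have hsub : ((Icc 1 N).filter (fun d : ℕ => y ≤ (d:ℝ))).filter (fun d => g ∣ d)
      ⊆ (Icc m N).image (fun a => g * a) := by
    intro d hd
    simp only [mem_filter, mem_Icc] at hd
    obtain ⟨⟨⟨hd1, hdN⟩, hyd⟩, hgd⟩ := hd
    rw [mem_image]
    refine ⟨d / g, ?_, Nat.mul_div_cancel' hgd⟩
    rw [mem_Icc]
    constructor
    · rw [hmdef]
      apply Nat.ceil_le.mpr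
      rw [div_le_iff₀ hg0]
      have : (↑(d/g) : ℝ) * g = ((d/g) * g : ℕ) := by push_cast; ring
      rw [this, Nat.div_mul_cancel hgd]
      exact hyd
    · exact le_trans (Nat.div_le_self d g) hdN
  calc ∑ d ∈ ((Icc 1 N).filter (fun d : ℕ => y ≤ (d:ℝ))).filter (fun d => g ∣ d), ((d:ℝ)^k)⁻¹
      ≤ ∑ d ∈ (Icc m N).image (fun a => g * a), ((d:ℝ)^k)⁻¹ := by
        apply Finset.sum_le_sum_of_subset_of_nonneg hsub
        intro i _ _; positivity
    _ = ∑ a ∈ Icc m N, (((g*a:ℕ):ℝ)^k)⁻¹ := by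
        rw [Finset.sum_image]
        intro x _ x' _ h
        exact Nat.eq_of_mul_eq_mul_left (by omega) h
    _ = ((g:ℝ)^k)⁻¹ * ∑ a ∈ Icc m N, ((a:ℝ)^k)⁻¹ := by
        rw [Finset.mul_sum]
        apply Finset.sum_congr rfl
        intro a _
        push_cast
        rw [mul_pow, mul_inv]
    _ ≤ ((g:ℝ)^k)⁻¹ * (2 / (m:ℝ)^(k-1)) := by
        apply mul_le_mul_of_nonneg_left (sum_inv_pow k m N hk hm) (by positivity)

theorem b_full_interval_L2 (k : ℕ) (hk : 2 ≤ k) :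
    ∃ C : ℝ, 0 < C ∧ ∀ y z : ℝ, 1 ≤ y → y < z → ∀ N : ℕ, 1 ≤ N →
      (∑ n ∈ Finset.Icc 1 N, ((b k y z n : ℝ)) ^ 2)
        ≤ C * (N : ℝ) * y ^ ((1 : ℝ) - (k : ℝ)) := by
  classical
  refine ⟨12, by norm_num, ?_⟩
  intro y z hy hyz N hN
  have hy0 : (0:ℝ) < y := by linarith
  set D : Finset ℕ := (Icc 1 N).filter (fun d : ℕ => y ≤ (d:ℝ)) with hDdef
  set A : ℕ → ℝ := fun g => ∑ d ∈ D.filter (fun d => g ∣ d), ((d:ℝ)^k)⁻¹ with hAdef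
  have stepA : ∀ n ∈ Icc 1 N, ((b k y z n : ℝ)) ^ 2
      ≤ ((D.filter (fun d => d^k ∣ n)).card : ℝ)^2 := by
    intro n hn
    rw [mem_Icc] at hn
    have habs : |b k y z n| ≤ ((D.filter (fun d => d^k ∣ n)).card : ℤ) := by
      unfold b
      refine le_trans (Finset.abs_sum_le_sum_abs _ _) ?_
      have h1 : ∀ d ∈ (Finset.Icc 1 n).filter
          (fun d : ℕ => y ≤ (d : ℝ) ∧ (d : ℝ) < z ∧ d ^ k ∣ n),
          |ArithmeticFunction.moebius d| ≤ 1 := by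
        intro d _
        exact ArithmeticFunction.abs_moebius_le_one
      refine le_trans (Finset.sum_le_sum h1) ?_
      rw [Finset.sum_const, nsmul_eq_mul, mul_one]
      have hsub : (Finset.Icc 1 n).filter
          (fun d : ℕ => y ≤ (d : ℝ) ∧ (d : ℝ) < z ∧ d ^ k ∣ n)
          ⊆ D.filter (fun d => d^k ∣ n) := by
        intro d hd
        simp only [mem_filter, mem_Icc, hDdef] at hd ⊢
        exact ⟨⟨⟨hd.1.1, le_trans hd.1.2 hn.2⟩, hd.2.1⟩, hd.2.2.2⟩
      exact_mod_cast Finset.card_le_card hsub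
    have h2 : (b k y z n)^2 ≤ ((D.filter (fun d => d^k ∣ n)).card : ℤ)^2 := by
      obtain ⟨hl, hr⟩ := abs_le.mp habs
      exact sq_le_sq' hl hr
    exact_mod_cast h2
  have stepB : ∑ n ∈ Icc 1 N, ((D.filter (fun d => d^k ∣ n)).card : ℝ)^2
      = ∑ d1 ∈ D, ∑ d2 ∈ D,
        (((Icc 1 N).filter (fun n => d1^k ∣ n ∧ d2^k ∣ n)).card : ℝ) := by
    have hc : ∀ n : ℕ, ((D.filter (fun d => d^k ∣ n)).card : ℝ)
        = ∑ d ∈ D, if d^k ∣ n then (1:ℝ) else 0 := by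
      intro n; rw [Finset.sum_boole]
    calc ∑ n ∈ Icc 1 N, ((D.filter (fun d => d^k ∣ n)).card : ℝ)^2
        = ∑ n ∈ Icc 1 N, ∑ d1 ∈ D, ∑ d2 ∈ D,
            (if d1^k ∣ n then (1:ℝ) else 0) * (if d2^k ∣ n then (1:ℝ) else 0) := by
          refine Finset.sum_congr rfl fun n _ => ?_
          rw [hc, sq, Finset.sum_mul_sum]
      _ = ∑ d1 ∈ D, ∑ d2 ∈ D, ∑ n ∈ Icc 1 N,
            (if d1^k ∣ n then (1:ℝ) else 0) * (if d2^k ∣ n then (1:ℝ) else 0) := by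
          rw [Finset.sum_comm]
          exact Finset.sum_congr rfl fun d1 _ => Finset.sum_comm
      _ = ∑ d1 ∈ D, ∑ d2 ∈ D,
            (((Icc 1 N).filter (fun n => d1^k ∣ n ∧ d2^k ∣ n)).card : ℝ) := by
          refine Finset.sum_congr rfl fun d1 _ => Finset.sum_congr rfl fun d2 _ => ?_
          rw [← Finset.sum_boole]
          refine Finset.sum_congr rfl fun n _ => ?_
          by_cases h1 : d1^k ∣ n <;> by_cases h2 : d2^k ∣ n <;>
            simp [h1, h2]
  have stepC : ∀ d1 ∈ D, ∀ d2 ∈ D,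
      (((Icc 1 N).filter (fun n => d1^k ∣ n ∧ d2^k ∣ n)).card : ℝ)
        ≤ (N:ℝ) * ((Nat.gcd d1 d2 : ℝ)^k * ((d1:ℝ)^k)⁻¹ * ((d2:ℝ)^k)⁻¹) := by
    intro d1 h1 d2 h2
    simp only [hDdef, mem_filter, mem_Icc] at h1 h2
    have hd1 : 1 ≤ d1 := h1.1.1
    have hd2 : 1 ≤ d2 := h2.1.1
    set L := Nat.lcm (d1^k) (d2^k) with hLdef
    have hL0 : 0 < L := Nat.pos_of_ne_zero
      (Nat.lcm_ne_zero (pow_ne_zero _ (by omega)) (pow_ne_zero _ (by omega)))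
    have hfe : (Icc 1 N).filter (fun n => d1^k ∣ n ∧ d2^k ∣ n)
        = (Ioc 0 N).filter (fun n => L ∣ n) := by
      rw [← Finset.Icc_add_one_left_eq_Ioc]
      exact Finset.filter_congr fun n _ => by
        simp only [hLdef, Nat.lcm_dvd_iff]
    have hcard : ((Icc 1 N).filter (fun n => d1^k ∣ n ∧ d2^k ∣ n)).card = N / L := by
      rw [hfe]
      exact Nat.Ioc_filter_dvd_card_eq_div N L
    rw [hcard]
    have hkey : (Nat.gcd d1 d2)^k * L = d1^k * d2^k := by
      rw [hLdef, ← gcd_pow_eq, Nat.gcd_mul_lcm]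
    have hkeyR : ((Nat.gcd d1 d2 : ℝ))^k * (L:ℝ) = (d1:ℝ)^k * (d2:ℝ)^k := by
      exact_mod_cast congrArg (fun x : ℕ => (x:ℝ)) hkey
    have hG0 : (0:ℝ) < (Nat.gcd d1 d2 : ℝ) := by
      have : 0 < Nat.gcd d1 d2 := Nat.gcd_pos_of_pos_left d2 (by omega)
      exact_mod_cast this
    have hd10 : (0:ℝ) < (d1:ℝ) := by exact_mod_cast hd1
    have hd20 : (0:ℝ) < (d2:ℝ) := by exact_mod_cast hd2
    have hL0R : (0:ℝ) < (L:ℝ) := by exact_mod_cast hL0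
    calc ((N / L : ℕ) : ℝ) ≤ (N:ℝ) / (L:ℝ) := Nat.cast_div_le
      _ = (N:ℝ) * ((Nat.gcd d1 d2 : ℝ)^k * ((d1:ℝ)^k)⁻¹ * ((d2:ℝ)^k)⁻¹) := by
          have hLval : (L:ℝ) = (d1:ℝ)^k * (d2:ℝ)^k / (Nat.gcd d1 d2 : ℝ)^k := by
            rw [eq_div_iff (by positivity)]
            linear_combination hkeyR
          rw [hLval]
          field_simp
  have stepD : ∀ d1 ∈ D, ∀ d2 ∈ D,
      (Nat.gcd d1 d2 : ℝ)^k * ((d1:ℝ)^k)⁻¹ * ((d2:ℝ)^k)⁻¹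
        ≤ ∑ g ∈ Icc 1 N, (g:ℝ)^k * (if g ∣ d1 then ((d1:ℝ)^k)⁻¹ else 0)
            * (if g ∣ d2 then ((d2:ℝ)^k)⁻¹ else 0) := by
    intro d1 h1 d2 h2
    simp only [hDdef, mem_filter, mem_Icc] at h1 h2
    have hmem : Nat.gcd d1 d2 ∈ Icc 1 N := by
      rw [mem_Icc]
      constructor
      · exact Nat.gcd_pos_of_pos_left d2 (by omega)
      · exact le_trans (Nat.le_of_dvd (by omega) (Nat.gcd_dvd_left d1 d2)) h1.1.2
    have := Finset.single_le_sum (f := fun g : ℕ => (g:ℝ)^k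
        * (if g ∣ d1 then ((d1:ℝ)^k)⁻¹ else 0) * (if g ∣ d2 then ((d2:ℝ)^k)⁻¹ else 0))
      (fun i _ => by split_ifs <;> positivity) hmem
    simpa [Nat.gcd_dvd_left, Nat.gcd_dvd_right] using this
  have stepE : ∑ d1 ∈ D, ∑ d2 ∈ D, ∑ g ∈ Icc 1 N,
        (g:ℝ)^k * (if g ∣ d1 then ((d1:ℝ)^k)⁻¹ else 0)
          * (if g ∣ d2 then ((d2:ℝ)^k)⁻¹ else 0)
      = ∑ g ∈ Icc 1 N, (g:ℝ)^k * A g * A g := by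
    have hA' : ∀ g : ℕ, A g = ∑ d ∈ D, (if g ∣ d then ((d:ℝ)^k)⁻¹ else 0) :=
      fun g => Finset.sum_filter _ _
    calc ∑ d1 ∈ D, ∑ d2 ∈ D, ∑ g ∈ Icc 1 N,
          (g:ℝ)^k * (if g ∣ d1 then ((d1:ℝ)^k)⁻¹ else 0)
            * (if g ∣ d2 then ((d2:ℝ)^k)⁻¹ else 0)
        = ∑ g ∈ Icc 1 N, ∑ d1 ∈ D, ∑ d2 ∈ D,
          (g:ℝ)^k * (if g ∣ d1 then ((d1:ℝ)^k)⁻¹ else 0)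
            * (if g ∣ d2 then ((d2:ℝ)^k)⁻¹ else 0) := by
          rw [show (∑ d1 ∈ D, ∑ d2 ∈ D, ∑ g ∈ Icc 1 N,
            (g:ℝ)^k * (if g ∣ d1 then ((d1:ℝ)^k)⁻¹ else 0)
              * (if g ∣ d2 then ((d2:ℝ)^k)⁻¹ else 0))
            = ∑ d1 ∈ D, ∑ g ∈ Icc 1 N, ∑ d2 ∈ D,
            (g:ℝ)^k * (if g ∣ d1 then ((d1:ℝ)^k)⁻¹ else 0)
              * (if g ∣ d2 then ((d2:ℝ)^k)⁻¹ else 0)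
            from Finset.sum_congr rfl fun d1 _ => Finset.sum_comm]
          exact Finset.sum_comm
      _ = ∑ g ∈ Icc 1 N, (g:ℝ)^k * A g * A g := by
          refine Finset.sum_congr rfl fun g _ => ?_
          calc ∑ d1 ∈ D, ∑ d2 ∈ D,
              (g:ℝ)^k * (if g ∣ d1 then ((d1:ℝ)^k)⁻¹ else 0)
                * (if g ∣ d2 then ((d2:ℝ)^k)⁻¹ else 0)
              = ∑ d1 ∈ D, ((g:ℝ)^k * (if g ∣ d1 then ((d1:ℝ)^k)⁻¹ else 0))
                  * ∑ d2 ∈ D, (if g ∣ d2 then ((d2:ℝ)^k)⁻¹ else 0) :=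
                Finset.sum_congr rfl fun d1 _ => by rw [Finset.mul_sum]
            _ = (g:ℝ)^k * (∑ d1 ∈ D, (if g ∣ d1 then ((d1:ℝ)^k)⁻¹ else 0))
                  * ∑ d2 ∈ D, (if g ∣ d2 then ((d2:ℝ)^k)⁻¹ else 0) := by
                rw [← Finset.sum_mul, ← Finset.mul_sum]
            _ = (g:ℝ)^k * A g * A g := by rw [hA' g]
  have stepF : ∑ g ∈ Icc 1 N, (g:ℝ)^k * A g * A g ≤ 12 / y^(k-1) := by
    have hAnn : ∀ g : ℕ, 0 ≤ A g := fun g => Finset.sum_nonneg fun d _ => by positivity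
    have hT : ∀ g ∈ Icc 1 N, (g:ℝ)^k * A g * A g
        ≤ ((g:ℝ)^k)⁻¹ * (4 / ((⌈y/(g:ℝ)⌉₊:ℝ)^(k-1))^2) := by
      intro g hg
      rw [mem_Icc] at hg
      have hg0 : (0:ℝ) < g := by exact_mod_cast hg.1
      have hm1 : (1:ℝ) ≤ (⌈y/(g:ℝ)⌉₊:ℝ) := by
        have : 1 ≤ ⌈y/(g:ℝ)⌉₊ := Nat.one_le_iff_ne_zero.mpr (by
          simp only [ne_eq, Nat.ceil_eq_zero, not_le]; positivity)
        exact_mod_cast this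
      have hU : A g ≤ ((g:ℝ)^k)⁻¹ * (2 / ((⌈y/(g:ℝ)⌉₊:ℝ))^(k-1)) :=
        Ag_bound k hk y hy N g hg.1
      have hAU : A g * A g ≤ (((g:ℝ)^k)⁻¹ * (2 / ((⌈y/(g:ℝ)⌉₊:ℝ))^(k-1)))
          * (((g:ℝ)^k)⁻¹ * (2 / ((⌈y/(g:ℝ)⌉₊:ℝ))^(k-1))) :=
        mul_le_mul hU hU (hAnn g) (by positivity)
      calc (g:ℝ)^k * A g * A g = (g:ℝ)^k * (A g * A g) := by ring
        _ ≤ (g:ℝ)^k * ((((g:ℝ)^k)⁻¹ * (2 / ((⌈y/(g:ℝ)⌉₊:ℝ))^(k-1)))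
              * (((g:ℝ)^k)⁻¹ * (2 / ((⌈y/(g:ℝ)⌉₊:ℝ))^(k-1)))) :=
            mul_le_mul_of_nonneg_left hAU (by positivity)
        _ = ((g:ℝ)^k)⁻¹ * (4 / ((⌈y/(g:ℝ)⌉₊:ℝ)^(k-1))^2) := by
            have h1 : ((g:ℝ)^k) ≠ 0 := by positivity
            have h2 : ((⌈y/(g:ℝ)⌉₊:ℝ)^(k-1)) ≠ 0 := by positivity
            field_simp
            ring
    rw [← Finset.sum_filter_add_sum_filter_not (Icc 1 N) (fun g : ℕ => (g:ℝ) ≤ y)]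
    have part1 : ∑ g ∈ (Icc 1 N).filter (fun g : ℕ => (g:ℝ) ≤ y), (g:ℝ)^k * A g * A g
        ≤ 4 / y^(k-1) := by
      have hterm : ∀ g ∈ (Icc 1 N).filter (fun g : ℕ => (g:ℝ) ≤ y),
          (g:ℝ)^k * A g * A g ≤ 4 / y^k := by
        intro g hg
        rw [mem_filter, mem_Icc] at hg
        obtain ⟨⟨hg1, hgN⟩, hgy⟩ := hg
        have hg0 : (0:ℝ) < g := by exact_mod_cast hg1
        refine le_trans (hT g (by rw [mem_Icc]; exact ⟨hg1, hgN⟩)) ?_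
        set m : ℝ := (⌈y/(g:ℝ)⌉₊:ℝ) with hmdef
        have hm1 : (1:ℝ) ≤ m := by
          rw [hmdef]
          have : 1 ≤ ⌈y/(g:ℝ)⌉₊ := Nat.one_le_iff_ne_zero.mpr (by
            simp only [ne_eq, Nat.ceil_eq_zero, not_le]; positivity)
          exact_mod_cast this
        have hgm : y ≤ (g:ℝ) * m := by
          rw [← div_le_iff₀' hg0]
          exact Nat.le_ceil _
        -- key : y^k ≤ g^k * (m^(k-1))^2
        have hkey : y^k ≤ (g:ℝ)^k * ((m^(k-1))^2) := by
          have e1 : (m^(k-1))^2 = m^k * m^(k-2) := by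
            rw [← pow_mul, ← pow_add]
            congr 1
            omega
          rw [e1, ← mul_assoc, ← mul_pow]
          calc y^k ≤ ((g:ℝ)*m)^k := pow_le_pow_left₀ (by linarith) hgm k
            _ ≤ ((g:ℝ)*m)^k * m^(k-2) := le_mul_of_one_le_right (by positivity)
                (one_le_pow₀ hm1)
        calc ((g:ℝ)^k)⁻¹ * (4 / ((m^(k-1))^2)) = 4 / ((g:ℝ)^k * (m^(k-1))^2) := by
              field_simp
          _ ≤ 4 / y^k := by
              apply div_le_div_of_nonneg_left (by norm_num) (by positivity) hkey
      calc ∑ g ∈ (Icc 1 N).filter (fun g : ℕ => (g:ℝ) ≤ y), (g:ℝ)^k * A g * A g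
          ≤ ((Icc 1 N).filter (fun g : ℕ => (g:ℝ) ≤ y)).card • (4 / y^k) :=
            Finset.sum_le_card_nsmul _ _ _ hterm
        _ = (((Icc 1 N).filter (fun g : ℕ => (g:ℝ) ≤ y)).card : ℝ) * (4 / y^k) := by
            rw [nsmul_eq_mul]
        _ ≤ y * (4 / y^k) := by
            apply mul_le_mul_of_nonneg_right _ (by positivity)
            have hsub : (Icc 1 N).filter (fun g : ℕ => (g:ℝ) ≤ y) ⊆ Icc 1 ⌊y⌋₊ := by
              intro g hg
              rw [mem_filter, mem_Icc] at hg
              rw [mem_Icc]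
              exact ⟨hg.1.1, Nat.le_floor hg.2⟩
            calc (((Icc 1 N).filter (fun g : ℕ => (g:ℝ) ≤ y)).card : ℝ)
                ≤ ((Icc 1 ⌊y⌋₊).card : ℝ) := by
                  exact_mod_cast Finset.card_le_card hsub
              _ = (⌊y⌋₊ : ℝ) := by rw [Nat.card_Icc]; simp
              _ ≤ y := Nat.floor_le (by positivity)
        _ = 4 / y^(k-1) := by
            have : y^k = y^(k-1) * y := by
              rw [← pow_succ]
              congr 1
              omega
            rw [this]
            field_simp
    have part2 : ∑ g ∈ (Icc 1 N).filter (fun g : ℕ => ¬ (g:ℝ) ≤ y), (g:ℝ)^k * A g * A g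
        ≤ 8 / y^(k-1) := by
      set m0 : ℕ := ⌈y⌉₊ with hm0def
      have hm01 : 1 ≤ m0 := Nat.one_le_iff_ne_zero.mpr (by
        simp only [hm0def, ne_eq, Nat.ceil_eq_zero, not_le]; positivity)
      calc ∑ g ∈ (Icc 1 N).filter (fun g : ℕ => ¬ (g:ℝ) ≤ y), (g:ℝ)^k * A g * A g
          ≤ ∑ g ∈ (Icc 1 N).filter (fun g : ℕ => ¬ (g:ℝ) ≤ y), 4 * ((g:ℝ)^k)⁻¹ := by
            refine Finset.sum_le_sum fun g hg => ?_
            rw [mem_filter] at hg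
            refine le_trans (hT g hg.1) ?_
            rw [mem_Icc] at hg
            have hm1 : (1:ℝ) ≤ (⌈y/(g:ℝ)⌉₊:ℝ) := by
              have hg0 : (0:ℝ) < g := by
                have := hg.1.1
                exact_mod_cast (by omega : 0 < g)
              have : 1 ≤ ⌈y/(g:ℝ)⌉₊ := Nat.one_le_iff_ne_zero.mpr (by
                simp only [ne_eq, Nat.ceil_eq_zero, not_le]; positivity)
              exact_mod_cast this
            have h2 : (1:ℝ) ≤ ((⌈y/(g:ℝ)⌉₊:ℝ)^(k-1))^2 := one_le_pow₀ (one_le_pow₀ hm1)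
            rw [mul_comm (4:ℝ) _]
            apply mul_le_mul_of_nonneg_left _ (by positivity)
            rw [div_le_iff₀ (by positivity)]
            nlinarith
        _ ≤ ∑ g ∈ Icc m0 N, 4 * ((g:ℝ)^k)⁻¹ := by
            apply Finset.sum_le_sum_of_subset_of_nonneg
            · intro g hg
              rw [mem_filter, mem_Icc] at hg
              rw [mem_Icc]
              exact ⟨Nat.ceil_le.mpr (le_of_lt (lt_of_not_ge hg.2)), hg.1.2⟩
            · intro g _ _; positivity
        _ = 4 * ∑ g ∈ Icc m0 N, ((g:ℝ)^k)⁻¹ := by rw [Finset.mul_sum]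
        _ ≤ 4 * (2 / (m0:ℝ)^(k-1)) :=
            mul_le_mul_of_nonneg_left (sum_inv_pow k m0 N hk hm01) (by norm_num)
        _ ≤ 8 / y^(k-1) := by
            have hym0 : y ≤ (m0:ℝ) := Nat.le_ceil y
            have : y^(k-1) ≤ (m0:ℝ)^(k-1) := pow_le_pow_left₀ (by positivity) hym0 _
            rw [show (4:ℝ) * (2 / (m0:ℝ)^(k-1)) = 8 / (m0:ℝ)^(k-1) by ring]
            apply div_le_div_of_nonneg_left (by norm_num) (by positivity) this
    linarith [part1, part2, show (4:ℝ)/y^(k-1) + 8/y^(k-1) = 12/y^(k-1) by ring]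
  have hyexp : y ^ ((1:ℝ) - (k:ℝ)) = (y^(k-1))⁻¹ := by
    rw [show (1:ℝ) - (k:ℝ) = -(((k-1 : ℕ)):ℝ) by
      push_cast [Nat.cast_sub (by omega : 1 ≤ k)]; ring,
      Real.rpow_neg (by linarith), Real.rpow_natCast]
  calc ∑ n ∈ Icc 1 N, ((b k y z n : ℝ)) ^ 2
      ≤ ∑ n ∈ Icc 1 N, ((D.filter (fun d => d^k ∣ n)).card : ℝ)^2 :=
        Finset.sum_le_sum stepA
    _ = ∑ d1 ∈ D, ∑ d2 ∈ D,
        (((Icc 1 N).filter (fun n => d1^k ∣ n ∧ d2^k ∣ n)).card : ℝ) := stepB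
    _ ≤ ∑ d1 ∈ D, ∑ d2 ∈ D, (N:ℝ) * (∑ g ∈ Icc 1 N,
          (g:ℝ)^k * (if g ∣ d1 then ((d1:ℝ)^k)⁻¹ else 0)
            * (if g ∣ d2 then ((d2:ℝ)^k)⁻¹ else 0)) := by
        refine Finset.sum_le_sum fun d1 h1 => Finset.sum_le_sum fun d2 h2 => ?_
        refine le_trans (stepC d1 h1 d2 h2) ?_
        exact mul_le_mul_of_nonneg_left (stepD d1 h1 d2 h2) (by positivity)
    _ = (N:ℝ) * ∑ g ∈ Icc 1 N, (g:ℝ)^k * A g * A g := by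
        rw [← stepE, Finset.mul_sum]
        exact Finset.sum_congr rfl fun d1 _ => by rw [Finset.mul_sum]
    _ ≤ (N:ℝ) * (12 / y^(k-1)) := by
        apply mul_le_mul_of_nonneg_left stepF (by positivity)
    _ = 12 * (N:ℝ) * y ^ ((1:ℝ) - (k:ℝ)) := by
        rw [hyexp]; ring
end

section
/- Let k ≥ 2 be an integer. There is a constant C = C(k) > 0 such that for all integers N ≥ 2 and all positive integers i, the exponential sum T_i(α) = ∑_{n ≤ N} b_{2^{i-1},2^i}(n) e(αn) satisfies ∫₀¹ |T_i(α)| dα ≤ C · 2^i log N. -/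
lemma norm_e (x : ℝ) : ‖e x‖ = 1 := by
  simp [e, Complex.norm_exp]

lemma e_eq (x : ℝ) : e x = Complex.exp ((2 * Real.pi * x : ℝ) * Complex.I) := by
  unfold e; push_cast; ring_nf

lemma e_nat_mul (x : ℝ) (m : ℕ) : e (x * m) = (e x) ^ m := by
  rw [e, e, ← Complex.exp_nat_mul]; push_cast; ring_nf

lemma e_norm_sub_one (β : ℝ) : ‖e β - 1‖ = 2 * |Real.sin (Real.pi * β)| := by
  rw [e_eq, Complex.exp_mul_I]
  rw [show Complex.cos (2*Real.pi*β : ℝ) + Complex.sin (2*Real.pi*β : ℝ) * Complex.I - 1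
      = ((Real.cos (2*Real.pi*β) - 1 : ℝ) : ℂ) + ((Real.sin (2*Real.pi*β) : ℝ) : ℂ) * Complex.I by
    push_cast [Complex.ofReal_cos, Complex.ofReal_sin]; ring]
  rw [Complex.norm_add_mul_I]
  have h : (Real.cos (2*Real.pi*β) - 1)^2 + (Real.sin (2*Real.pi*β))^2
      = (2 * |Real.sin (Real.pi * β)|)^2 := by
    have hs := Real.sin_sq_eq_half_sub (Real.pi * β)
    have : (2:ℝ) * (Real.pi * β) = 2*Real.pi*β := by ring
    rw [this] at hs
    have hpy := Real.sin_sq_add_cos_sq (2*Real.pi*β)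
    have : |Real.sin (Real.pi*β)|^2 = Real.sin (Real.pi*β)^2 := sq_abs _
    nlinarith
  rw [h, Real.sqrt_sq (by positivity)]

noncomputable def D (M : ℕ) (β : ℝ) : ℂ := ∑ m ∈ Finset.Icc 1 M, e (β * m)

lemma normD_le_card (M : ℕ) (β : ℝ) : ‖D M β‖ ≤ M := by
  calc ‖D M β‖ ≤ ∑ m ∈ Finset.Icc 1 M, ‖e (β * m)‖ := norm_sum_le _ _
  _ = ∑ m ∈ Finset.Icc 1 M, (1:ℝ) := by
        apply Finset.sum_congr rfl; intro x _; exact norm_e _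
  _ ≤ M := by simp

lemma continuous_e : Continuous e := by
  unfold e; exact Complex.continuous_exp.comp (by continuity)

lemma continuous_normD (M : ℕ) : Continuous (fun β => ‖D M β‖) := by
  apply Continuous.norm
  unfold D
  exact continuous_finset_sum _ fun m _ => continuous_e.comp (by continuity)

lemma sin_lower {β : ℝ} (h0 : 0 < β) (h1 : β < 1) :
    2 * min β (1 - β) ≤ Real.sin (Real.pi * β) := by
  have hm0 : 0 < min β (1 - β) := lt_min h0 (by linarith)
  have hm2 : min β (1 - β) ≤ 1/2 := by
    rcases min_le_iff.mpr (Or.inl (le_refl β)) with h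
    rcases le_total β (1-β) with h' | h'
    · rw [min_eq_left h']; linarith
    · rw [min_eq_right h']; linarith
  have hsin : Real.sin (Real.pi * min β (1 - β)) = Real.sin (Real.pi * β) := by
    rcases min_choice β (1 - β) with h | h
    · rw [h]
    · rw [h, show Real.pi * (1 - β) = Real.pi - Real.pi * β by ring, Real.sin_pi_sub]
  have := Real.mul_le_sin (x := Real.pi * min β (1 - β)) (by positivity)
    (by nlinarith [Real.pi_pos])
  rw [hsin] at this
  calc 2 * min β (1-β) = 2 / Real.pi * (Real.pi * min β (1-β)) := by
        field_simp
  _ ≤ Real.sin (Real.pi * β) := this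

lemma normD_le_inv {M : ℕ} {β : ℝ} (h0 : 0 < β) (h1 : β < 1) :
    ‖D M β‖ ≤ (2*β)⁻¹ + (2*(1-β))⁻¹ := by
  set m := min β (1 - β) with hm
  have hm0 : 0 < m := lt_min h0 (by linarith)
  have hsin := sin_lower h0 h1
  have hlow : 4 * m ≤ ‖e β - 1‖ := by
    rw [e_norm_sub_one]
    have : Real.sin (Real.pi * β) ≤ |Real.sin (Real.pi * β)| := le_abs_self _
    linarith
  have hz1 : e β ≠ 1 := by
    intro h
    rw [h] at hlow; simp at hlow; linarith
  have hD : D M β = e β * ((e β) ^ M - 1) / (e β - 1) := by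
    unfold D
    have h1' : Finset.Icc 1 M = Finset.Ico 1 (M+1) := by
      rw [Finset.Ico_add_one_right_eq_Icc]
    rw [h1', Finset.sum_Ico_eq_sum_range]
    simp only [Nat.add_sub_cancel]
    have : ∀ j : ℕ, e (β * (1 + j : ℕ)) = e β * (e β)^j := by
      intro j
      rw [e_nat_mul β (1+j), pow_add, pow_one]
    simp only [this]
    rw [← Finset.mul_sum, geom_sum_eq hz1, mul_div_assoc]
  have hne : 0 < ‖e β - 1‖ := by
    rw [norm_pos_iff, sub_ne_zero]; exact hz1
  have hnorm : ‖D M β‖ ≤ 2 / ‖e β - 1‖ := by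
    rw [hD, norm_div, norm_mul, norm_e, one_mul]
    gcongr
    calc ‖e β ^ M - 1‖ ≤ ‖e β ^ M‖ + ‖(1:ℂ)‖ := norm_sub_le _ _
    _ = 2 := by rw [norm_pow, norm_e]; norm_num
  have h2 : 2 / ‖e β - 1‖ ≤ (2*m)⁻¹ := by
    have : 2 / ‖e β - 1‖ ≤ 2 / (4*m) := by gcongr
    calc 2 / ‖e β - 1‖ ≤ 2 / (4*m) := this
    _ = (2*m)⁻¹ := by rw [inv_eq_one_div]; field_simp; ring
  have h3 : (2*m)⁻¹ ≤ (2*β)⁻¹ + (2*(1-β))⁻¹ := by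
    have hb : 0 < 1 - β := by linarith
    rcases min_choice β (1-β) with h | h
    · rw [hm, h]
      have : 0 ≤ (2*(1-β))⁻¹ := by positivity
      linarith
    · rw [hm, h]
      have : 0 ≤ (2*β)⁻¹ := by positivity
      linarith
  linarith

lemma e_one : e 1 = 1 := by
  unfold e; push_cast; rw [mul_one]; exact Complex.exp_two_pi_mul_I

lemma e_add (x y : ℝ) : e (x + y) = e x * e y := by
  unfold e; rw [← Complex.exp_add]; push_cast; ring_nf

lemma periodic_normD (M : ℕ) : Function.Periodic (fun β => ‖D M β‖) 1 := by
  intro β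
  have hD : D M (β + 1) = D M β := by
    unfold D
    apply Finset.sum_congr rfl
    intro m _
    have : (β + 1) * (m:ℝ) = β * m + 1 * m := by ring
    rw [this, e_add, e_nat_mul 1 m, e_one, one_pow, mul_one]
  simp only [hD]

lemma intInt (M : ℕ) : ∀ t₁ t₂ : ℝ, IntervalIntegrable (fun β => ‖D M β‖)
    MeasureTheory.volume t₁ t₂ :=
  fun t₁ t₂ => (continuous_normD M).intervalIntegrable t₁ t₂

lemma integral_comp_q (M q : ℕ) (hq : 1 ≤ q) :
    (∫ α in (0:ℝ)..1, ‖D M ((q:ℝ) * α)‖) = ∫ β in (0:ℝ)..1, ‖D M β‖ := by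
  have hq0 : (q:ℝ) ≠ 0 := Nat.cast_ne_zero.mpr (by omega)
  rw [intervalIntegral.integral_comp_mul_left (fun x => ‖D M x‖) hq0]
  have hz := (periodic_normD M).intervalIntegral_add_zsmul_eq (q:ℤ) 0 (intInt M)
  simp only [zero_add, zsmul_eq_mul, Int.cast_natCast, mul_one] at hz
  rw [mul_zero, mul_one, hz, smul_eq_mul]
  field_simp

lemma dirichlet_L1 (N M : ℕ) (hN : 2 ≤ N) (hMN : M ≤ N) :
    (∫ β in (0:ℝ)..1, ‖D M β‖) ≤ 2 + Real.log N := by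
  have hlogN : 0 ≤ Real.log N := Real.log_nonneg (by exact_mod_cast hN.trans' (by norm_num))
  rcases le_or_gt M 1 with hM | hM
  · have h1 : (∫ β in (0:ℝ)..1, ‖D M β‖) ≤ ∫ β in (0:ℝ)..1, (1:ℝ) := by
      apply intervalIntegral.integral_mono_on (by norm_num) (intInt M 0 1)
        intervalIntegrable_const
      intro x _
      calc ‖D M x‖ ≤ (M:ℝ) := normD_le_card M x
      _ ≤ 1 := by exact_mod_cast hM
    have h2 : (∫ β in (0:ℝ)..1, (1:ℝ)) = 1 := by simp
    rw [h2] at h1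
    linarith
  · set a : ℝ := (M:ℝ)⁻¹ with ha
    have hM0 : (0:ℝ) < M := by exact_mod_cast hM.trans' (by norm_num)
    have ha0 : 0 < a := by positivity
    have haM : a * M = 1 := by rw [ha]; exact inv_mul_cancel₀ (ne_of_gt hM0)
    have hah : a ≤ 1/2 := by
      rw [ha]
      rw [inv_le_comm₀ (by positivity) (by norm_num)]
      norm_num
      exact_mod_cast hM
    have haa : a ≤ 1 - a := by linarith
    have hsplit : (∫ β in (0:ℝ)..a, ‖D M β‖) + (∫ β in a..(1-a), ‖D M β‖)
        + (∫ β in (1-a)..1, ‖D M β‖) = ∫ β in (0:ℝ)..1, ‖D M β‖ := by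
      rw [intervalIntegral.integral_add_adjacent_intervals (intInt M 0 a) (intInt M a (1-a)),
        intervalIntegral.integral_add_adjacent_intervals (intInt M 0 (1-a)) (intInt M (1-a) 1)]
    have hp1 : (∫ β in (0:ℝ)..a, ‖D M β‖) ≤ 1 := by
      have h := intervalIntegral.integral_mono_on ha0.le (intInt M 0 a) intervalIntegrable_const
        (fun x _ => normD_le_card M x)
      calc (∫ β in (0:ℝ)..a, ‖D M β‖) ≤ (a - 0) • (M:ℝ) := by simpa using h
      _ = 1 := by rw [smul_eq_mul, sub_zero]; exact haM
    have hp3 : (∫ β in (1-a)..1, ‖D M β‖) ≤ 1 := by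
      have := intervalIntegral.integral_mono_on (by linarith : (1:ℝ)-a ≤ 1) (intInt M (1-a) 1)
        intervalIntegrable_const (fun x _ => normD_le_card M x)
      calc (∫ β in (1-a)..1, ‖D M β‖) ≤ (1 - (1-a)) • (M:ℝ) := by
            simpa using this
      _ = 1 := by rw [smul_eq_mul]; rw [show (1:ℝ) - (1-a) = a by ring]; exact haM
    have hgcont : ContinuousOn (fun β : ℝ => (2*β)⁻¹ + (2*(1-β))⁻¹) (Set.uIcc a (1-a)) := by
      rw [Set.uIcc_of_le haa]
      apply ContinuousOn.add
      · exact (continuousOn_const.mul continuousOn_id).inv₀ fun x hx => by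
          have hx0 : 0 < x := lt_of_lt_of_le ha0 hx.1
          show (2:ℝ) * x ≠ 0; positivity
      · exact (continuousOn_const.mul (continuousOn_const.sub continuousOn_id)).inv₀
          fun x hx => by
            have h1 := hx.2
            have : 0 < 1 - x := by linarith
            show (2:ℝ) * (1 - x) ≠ 0; positivity
    have hgint : IntervalIntegrable (fun β : ℝ => (2*β)⁻¹ + (2*(1-β))⁻¹)
        MeasureTheory.volume a (1-a) := hgcont.intervalIntegrable
    have hp2 : (∫ β in a..(1-a), ‖D M β‖) ≤ Real.log N := by
      have hmono := intervalIntegral.integral_mono_on haa (intInt M a (1-a)) hgint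
        (fun x hx => by
          have hx1 : 0 < x := lt_of_lt_of_le ha0 hx.1
          have hx2 : x < 1 := by have := hx.2; linarith
          exact normD_le_inv hx1 hx2)
      have hnm : (0:ℝ) ∉ Set.uIcc a (1-a) := Set.notMem_uIcc_of_lt ha0 (by linarith)
      have i1 : (∫ β in a..(1-a), (2*β)⁻¹) = 2⁻¹ * Real.log ((1-a)/a) := by
        simp_rw [mul_inv]
        rw [intervalIntegral.integral_const_mul, integral_inv hnm]
      have i2 : (∫ β in a..(1-a), (2*(1-β))⁻¹) = 2⁻¹ * Real.log ((1-a)/a) := by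
        have hc := intervalIntegral.integral_comp_sub_left (a := a) (b := 1-a)
          (fun x => (2*x)⁻¹) 1
        rw [show (1:ℝ) - (1-a) = a by ring] at hc
        rw [hc, ← i1]
      have hg1 : IntervalIntegrable (fun β : ℝ => (2*β)⁻¹) MeasureTheory.volume a (1-a) := by
        apply ContinuousOn.intervalIntegrable
        exact (continuousOn_const.mul continuousOn_id).inv₀ fun x hx => by
          rw [Set.uIcc_of_le haa] at hx
          have hx0 : 0 < x := lt_of_lt_of_le ha0 hx.1
          show (2:ℝ) * x ≠ 0; positivity
      have hg2 : IntervalIntegrable (fun β : ℝ => (2*(1-β))⁻¹) MeasureTheory.volume a (1-a) := by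
        apply ContinuousOn.intervalIntegrable
        exact (continuousOn_const.mul (continuousOn_const.sub continuousOn_id)).inv₀
          fun x hx => by
            rw [Set.uIcc_of_le haa] at hx
            have : 0 < 1 - x := by have := hx.2; linarith
            show (2:ℝ) * (1 - x) ≠ 0; positivity
      have isum : (∫ β in a..(1-a), ((2*β)⁻¹ + (2*(1-β))⁻¹))
          = Real.log ((1-a)/a) := by
        rw [intervalIntegral.integral_add hg1 hg2, i1, i2]; ring
      rw [isum] at hmono
      have hfrac : (1-a)/a ≤ (N:ℝ) := by
        rw [div_le_iff₀ ha0]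
        have hMN' : (M:ℝ) ≤ N := by exact_mod_cast hMN
        nlinarith
      have hlog : Real.log ((1-a)/a) ≤ Real.log N :=
        Real.log_le_log (div_pos (by linarith) ha0) hfrac
      linarith
    linarith



/-- The exponential sum `T_i(α) = ∑_{n ≤ N} b_{2^{i-1},2^i}(n) e(αn)`. -/
noncomputable def T (k N i : ℕ) (α : ℝ) : ℂ :=
  ∑ n ∈ Finset.Icc 1 N, (b k ((2 : ℝ) ^ (i - 1)) ((2 : ℝ) ^ i) n : ℂ) * e (α * n)

lemma b_eq (k i n : ℕ) (hn : 1 ≤ n) (hk : 1 ≤ k) :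
    b k ((2:ℝ)^(i-1)) ((2:ℝ)^i) n
      = ∑ d ∈ Finset.Ico (2^(i-1)) (2^i),
          (if d^k ∣ n then ArithmeticFunction.moebius d else 0) := by
  rw [b, ← Finset.sum_filter]
  apply Finset.sum_congr _ (fun _ _ => rfl)
  ext d
  simp only [Finset.mem_filter, Finset.mem_Icc, Finset.mem_Ico]
  have c1 : ((2:ℝ)^(i-1) ≤ (d:ℝ)) ↔ 2^(i-1) ≤ d := by
    rw [show (2:ℝ)^(i-1) = ((2^(i-1) : ℕ) : ℝ) by push_cast; ring]
    exact Nat.cast_le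
  have c2 : ((d:ℝ) < (2:ℝ)^i) ↔ d < 2^i := by
    rw [show (2:ℝ)^i = ((2^i : ℕ) : ℝ) by push_cast; ring]
    exact Nat.cast_lt
  constructor
  · rintro ⟨⟨h1, h2⟩, h3, h4, h5⟩
    exact ⟨⟨c1.mp h3, c2.mp h4⟩, h5⟩
  · rintro ⟨⟨h3, h4⟩, h5⟩
    have hd1 : 1 ≤ d := le_trans (Nat.one_le_two_pow) h3
    have hdn : d ≤ n := by
      calc d ≤ d^k := Nat.le_self_pow (by omega) d
      _ ≤ n := Nat.le_of_dvd (by omega) h5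
    exact ⟨⟨hd1, hdn⟩, c1.mpr h3, c2.mpr h4, h5⟩

lemma innerSumEq (dk N : ℕ) (hdk : 1 ≤ dk) (f : ℕ → ℂ) :
    ∑ n ∈ (Finset.Icc 1 N).filter (fun n => dk ∣ n), f n
      = ∑ m ∈ Finset.Icc 1 (N / dk), f (dk * m) := by
  apply Finset.sum_nbij' (i := fun n => n / dk) (j := fun m => dk * m)
  · intro n hn
    simp only [Finset.mem_filter, Finset.mem_Icc] at hn ⊢
    obtain ⟨⟨h1, h2⟩, h3⟩ := hn
    constructor
    · rw [Nat.one_le_div_iff (by omega)]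
      exact Nat.le_of_dvd (by omega) h3
    · exact Nat.div_le_div_right h2
  · intro m hm
    simp only [Finset.mem_filter, Finset.mem_Icc] at hm ⊢
    obtain ⟨h1, h2⟩ := hm
    refine ⟨⟨Nat.mul_pos (by omega) h1, ?_⟩, Dvd.intro m rfl⟩
    rw [Nat.le_div_iff_mul_le (by omega)] at h2
    calc dk * m = m * dk := Nat.mul_comm _ _
    _ ≤ N := h2
  · intro n hn
    simp only [Finset.mem_filter] at hn
    exact Nat.mul_div_cancel' hn.2
  · intro m _
    exact Nat.mul_div_cancel_left m (by omega)
  · intro n hn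
    simp only [Finset.mem_filter] at hn
    rw [Nat.mul_div_cancel' hn.2]

lemma T_eq (k N i : ℕ) (hk : 1 ≤ k) (α : ℝ) :
    T k N i α = ∑ d ∈ Finset.Ico (2^(i-1)) (2^i),
      ((ArithmeticFunction.moebius d : ℤ) : ℂ) * D (N / d^k) (((d^k : ℕ) : ℝ) * α) := by
  unfold T
  have step1 : ∀ n ∈ Finset.Icc 1 N,
      (b k ((2:ℝ)^(i-1)) ((2:ℝ)^i) n : ℂ) * e (α * n)
        = ∑ d ∈ Finset.Ico (2^(i-1)) (2^i),
            (if d^k ∣ n then ((ArithmeticFunction.moebius d : ℤ) : ℂ) * e (α * n) else 0) := by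
    intro n hn
    simp only [Finset.mem_Icc] at hn
    rw [b_eq k i n hn.1 hk]
    push_cast
    rw [Finset.sum_mul]
    apply Finset.sum_congr rfl
    intro d _
    split <;> simp
  rw [Finset.sum_congr rfl step1, Finset.sum_comm]
  apply Finset.sum_congr rfl
  intro d hd
  simp only [Finset.mem_Ico] at hd
  have hdk : 1 ≤ d^k := Nat.one_le_pow _ _ (by
    have := Nat.one_le_two_pow (n := i-1); omega)
  rw [← Finset.sum_filter, ← Finset.mul_sum,
    innerSumEq (d^k) N hdk (fun n => e (α * n))]
  congr 1
  unfold D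
  apply Finset.sum_congr rfl
  intro m _
  congr 1
  push_cast
  ring



theorem Ti_L1_bound (k : ℕ) (hk : 2 ≤ k) :
    ∃ C : ℝ, 0 < C ∧ ∀ N : ℕ, 2 ≤ N → ∀ i : ℕ, 1 ≤ i →
      (∫ α in (0:ℝ)..1, ‖T k N i α‖) ≤ C * (2 : ℝ) ^ i * Real.log N := by
  have hl2 : 0 < Real.log 2 := Real.log_pos (by norm_num)
  refine ⟨2 / Real.log 2 + 1, by positivity, ?_⟩
  intro N hN i hi
  have hN1 : (1:ℝ) < (N:ℝ) := by exact_mod_cast lt_of_lt_of_le one_lt_two hN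
  have hlogN : 0 < Real.log N := Real.log_pos hN1
  set s := Finset.Ico (2^(i-1)) (2^i) with hs
  -- pointwise bound
  have hconte : ∀ (d : ℕ), Continuous fun α : ℝ => ‖D (N / d^k) (((d^k : ℕ) : ℝ) * α)‖ :=
    fun d => (continuous_normD _).comp (continuous_const.mul continuous_id)
  have hcontT : Continuous fun α => ‖T k N i α‖ := by
    apply Continuous.norm
    unfold T
    exact continuous_finset_sum _ fun n _ =>
      continuous_const.mul (continuous_e.comp (continuous_id.mul continuous_const))
  have hintg : ∀ d ∈ s, IntervalIntegrable
      (fun α : ℝ => ‖D (N / d^k) (((d^k : ℕ) : ℝ) * α)‖) MeasureTheory.volume 0 1 :=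
    fun d _ => (hconte d).intervalIntegrable 0 1
  have hptw : ∀ α ∈ Set.Icc (0:ℝ) 1, ‖T k N i α‖
      ≤ ∑ d ∈ s, ‖D (N / d^k) (((d^k : ℕ) : ℝ) * α)‖ := by
    intro α _
    rw [T_eq k N i (by omega) α]
    refine (norm_sum_le _ _).trans (Finset.sum_le_sum fun d _ => ?_)
    rw [norm_mul]
    have hmu : ‖((ArithmeticFunction.moebius d : ℤ) : ℂ)‖ ≤ 1 := by
      rw [Complex.norm_intCast]
      exact_mod_cast ArithmeticFunction.abs_moebius_le_one
    calc ‖((ArithmeticFunction.moebius d : ℤ) : ℂ)‖ * ‖D (N / d^k) (((d^k : ℕ) : ℝ) * α)‖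
        ≤ 1 * ‖D (N / d^k) (((d^k : ℕ) : ℝ) * α)‖ :=
          mul_le_mul_of_nonneg_right hmu (norm_nonneg _)
    _ = _ := one_mul _
  have step1 : (∫ α in (0:ℝ)..1, ‖T k N i α‖)
      ≤ ∫ α in (0:ℝ)..1, ∑ d ∈ s, ‖D (N / d^k) (((d^k : ℕ) : ℝ) * α)‖ := by
    apply intervalIntegral.integral_mono_on (by norm_num) (hcontT.intervalIntegrable 0 1)
      ((continuous_finset_sum s (fun d _ => hconte d)).intervalIntegrable 0 1)
    exact hptw
  have step2 : (∫ α in (0:ℝ)..1, ∑ d ∈ s, ‖D (N / d^k) (((d^k : ℕ) : ℝ) * α)‖)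
      = ∑ d ∈ s, ∫ α in (0:ℝ)..1, ‖D (N / d^k) (((d^k : ℕ) : ℝ) * α)‖ :=
    intervalIntegral.integral_finset_sum hintg
  have step3 : ∀ d ∈ s, (∫ α in (0:ℝ)..1, ‖D (N / d^k) (((d^k : ℕ) : ℝ) * α)‖)
      ≤ 2 + Real.log N := by
    intro d hd
    rw [hs, Finset.mem_Ico] at hd
    have hd1 : 1 ≤ d := le_trans Nat.one_le_two_pow hd.1
    have hq : 1 ≤ d^k := Nat.one_le_pow _ _ (by omega)
    rw [integral_comp_q (N / d^k) (d^k) hq]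
    exact dirichlet_L1 N (N / d^k) hN (Nat.div_le_self N _)
  have step4 : (∑ d ∈ s, ∫ α in (0:ℝ)..1, ‖D (N / d^k) (((d^k : ℕ) : ℝ) * α)‖)
      ≤ (2^(i-1) : ℝ) * (2 + Real.log N) := by
    calc (∑ d ∈ s, ∫ α in (0:ℝ)..1, ‖D (N / d^k) (((d^k : ℕ) : ℝ) * α)‖)
        ≤ ∑ _d ∈ s, (2 + Real.log N) := Finset.sum_le_sum step3
    _ = (s.card : ℝ) * (2 + Real.log N) := by
        rw [Finset.sum_const, nsmul_eq_mul]
    _ ≤ (2^(i-1) : ℝ) * (2 + Real.log N) := by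
        apply mul_le_mul_of_nonneg_right _ (by positivity)
        rw [hs, Nat.card_Ico]
        have hcard : 2^i - 2^(i-1) ≤ 2^(i-1) := by
          have : 2^i = 2 * 2^(i-1) := by
            rw [← pow_succ']
            congr 1
            omega
          omega
        calc ((2^i - 2^(i-1) : ℕ) : ℝ) ≤ ((2^(i-1) : ℕ) : ℝ) := by exact_mod_cast hcard
        _ = (2:ℝ)^(i-1) := by push_cast; ring
  -- final arithmetic
  have harith : (2:ℝ)^(i-1) * (2 + Real.log N) ≤ (2 / Real.log 2 + 1) * 2^i * Real.log N := by
    have hlN : Real.log 2 ≤ Real.log N := Real.log_le_log (by norm_num) (by exact_mod_cast hN)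
    have h1 : (2:ℝ) + Real.log N ≤ (2 / Real.log 2 + 1) * Real.log N := by
      have h2 : (2:ℝ) = (2 / Real.log 2) * Real.log 2 := by field_simp
      calc (2:ℝ) + Real.log N = (2 / Real.log 2) * Real.log 2 + Real.log N := by rw [← h2]
      _ ≤ (2 / Real.log 2) * Real.log N + Real.log N := by
          have : (0:ℝ) ≤ 2 / Real.log 2 := by positivity
          nlinarith
      _ = (2 / Real.log 2 + 1) * Real.log N := by ring
    have h3 : (2:ℝ)^(i-1) ≤ 2^i := pow_le_pow_right₀ (by norm_num) (Nat.sub_le i 1)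
    calc (2:ℝ)^(i-1) * (2 + Real.log N) ≤ (2:ℝ)^i * ((2 / Real.log 2 + 1) * Real.log N) := by
          apply mul_le_mul h3 h1 (by positivity) (by positivity)
    _ = (2 / Real.log 2 + 1) * 2^i * Real.log N := by ring
  calc (∫ α in (0:ℝ)..1, ‖T k N i α‖)
      ≤ ∑ d ∈ s, ∫ α in (0:ℝ)..1, ‖D (N / d^k) (((d^k : ℕ) : ℝ) * α)‖ := step2 ▸ step1
  _ ≤ (2^(i-1) : ℝ) * (2 + Real.log N) := step4
  _ ≤ (2 / Real.log 2 + 1) * 2^i * Real.log N := harith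
end
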